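/- arXiv:1307.1353 — 6 statements merged into one kernel-verified Lean document; each statement's English description precedes it below -/
import Mathlib

section
/- Let G and H be finite simple graphs, let S ⊆ V(G) be a set of vertices that induces a connected subgraph of G, and let (B_h)_{h ∈ V(H)} be an H-deconstruction of G. Then the set {h ∈ V(H) : S ∩ B_h ≠ ∅} induces a connected subgraph of H. -/
open SimpleGraph

/-- The reflexive closure of the adjacency relation of a graph. -/
def reflAdj {α : Type} (G : SimpleGraph α) (a b : α) : Prop := a = b ∨ G.Adj a b

/-- A set of vertices induces a connected subgraph of `G`. -/
def ConnSet {α : Type} (G : SimpleGraph α) (s : Set α) : Prop := (G.induce s).Connected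

/-- `B` is an `H`-deconstruction of `G`: coverage and connectivity. -/
def IsDeconstruction {α β : Type} (G : SimpleGraph α) (H : SimpleGraph β)
    (B : β → Set α) : Prop :=
  (∀ g g' : α, reflAdj G g g' →
      ∃ h h' : β, reflAdj H h h' ∧ g ∈ B h ∪ B h' ∧ g' ∈ B h ∪ B h') ∧
  (∀ g : α, ConnSet H {h | g ∈ B h})

/-- The family `B` (viewed as an `H`-indexed family of bags) has width at most `w`. -/
def DeconWidthLE {α β : Type} (H : SimpleGraph β) (B : β → Set α) (w : ℕ) : Prop :=
  ∀ h h' : β, reflAdj H h h' → (B h ∪ B h').ncard ≤ w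

/-- `B` is an `H`-decomposition of `G`: each (refl-)edge inside a single bag, plus
connectivity. -/
def IsDecomposition {α β : Type} (G : SimpleGraph α) (H : SimpleGraph β)
    (B : β → Set α) : Prop :=
  (∀ g g' : α, reflAdj G g g' → ∃ h : β, g ∈ B h ∧ g' ∈ B h) ∧
  (∀ g : α, ConnSet H {h | g ∈ B h})

/-- A finite simple graph, presented on a vertex set `Fin n`. -/
structure FinGraph where
  n : ℕ
  G : SimpleGraph (Fin n)

/-- `𝒢 ≼ ℋ` : every graph in `𝒢` has an `H`-deconstruction of width `≤ w`
for some `H ∈ ℋ`, for a uniform constant `w`. -/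
def DeconLE (𝒢 ℋ : Set FinGraph) : Prop :=
  ∃ w : ℕ, ∀ G ∈ 𝒢, ∃ H ∈ ℋ, ∃ B : Fin H.n → Set (Fin G.n),
    IsDeconstruction G.G H.G B ∧ DeconWidthLE H.G B w

/-- `𝒢 ≡ ℋ`. -/
def DeconEquiv (𝒢 ℋ : Set FinGraph) : Prop := DeconLE 𝒢 ℋ ∧ DeconLE ℋ 𝒢

/-- `𝒢 ≺ ℋ`. -/
def DeconLT (𝒢 ℋ : Set FinGraph) : Prop := DeconLE 𝒢 ℋ ∧ ¬ DeconEquiv 𝒢 ℋ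

/-- `μ` is a minor map from `M` to `G`. -/
def IsMinorMap {α β : Type} (M : SimpleGraph α) (G : SimpleGraph β)
    (μ : α → Set β) : Prop :=
  (∀ m : α, ConnSet G (μ m)) ∧
  (∀ m m' : α, m ≠ m' → Disjoint (μ m) (μ m')) ∧
  (∀ m m' : α, M.Adj m m' → ∃ g ∈ μ m, ∃ g' ∈ μ m', G.Adj g g')

/-- `M` is a minor of `G`. -/
def IsMinor (M G : FinGraph) : Prop :=
  ∃ μ : Fin M.n → Set (Fin G.n), IsMinorMap M.G G.G μ

/-- The class of all minors of graphs in `𝒢`. -/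
def minorsCl (𝒢 : Set FinGraph) : Set FinGraph := {M | ∃ G ∈ 𝒢, IsMinor M G}

/-- The (connected) graph `G`, viewed as a tree, has height at most `d`:
some rooting puts every vertex within distance `d` of the root. -/
def treeHeightLE (G : FinGraph) (d : ℕ) : Prop :=
  ∃ r : Fin G.n, ∀ v : Fin G.n, G.G.dist r v ≤ d

/-- Every connected component of `G` has height at most `d`. -/
def forestHeightLE (G : FinGraph) (d : ℕ) : Prop :=
  ∀ v : Fin G.n, ∃ r : Fin G.n, G.G.Reachable r v ∧
    ∀ u : Fin G.n, G.G.Reachable r u → G.G.dist r u ≤ d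

/-- `ℒ` : the class of all finite simple graphs. -/
def classL : Set FinGraph := Set.univ

/-- `𝒯` : the class of all finite trees. -/
def classT : Set FinGraph := {G | G.G.IsTree}

/-- `𝒫` : the class of all finite paths (on at least two vertices). -/
def classP : Set FinGraph := {G | ∃ m : ℕ, 2 ≤ m ∧ Nonempty (G.G ≃g pathGraph m)}

/-- `𝒯_d` : all finite trees of height at most `d`. -/
def classTd (d : ℕ) : Set FinGraph := {G | G.G.IsTree ∧ treeHeightLE G d}

/-- `ℱ_d` : all finite forests of height at most `d`. -/
def classFd (d : ℕ) : Set FinGraph := {G | G.G.IsAcyclic ∧ forestHeightLE G d}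

/-- The complete `k`-ary tree `T_{h,k}` of height `h`, on strings over `[k]` of
length at most `h`; each string of length `< h` is joined to its one-symbol extensions. -/
def kAryTree (h k : ℕ) : SimpleGraph {l : List (Fin k) // l.length ≤ h} :=
  SimpleGraph.fromRel (fun a b => ∃ i : Fin k, b.1 = i :: a.1)

/-- For every `k ≥ 1`, the tree `T_{h,k}` is a minor of some graph in `𝒢`. -/
def StackAll (𝒢 : Set FinGraph) (h : ℕ) : Prop :=
  ∀ k : ℕ, 1 ≤ k → ∃ G ∈ 𝒢, ∃ μ : {l : List (Fin k) // l.length ≤ h} → Set (Fin G.n),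
    IsMinorMap (kAryTree h k) G.G μ

/-- `𝒢` has stack depth (exactly) `d`. -/
def HasStackDepth (𝒢 : Set FinGraph) (d : ℕ) : Prop :=
  StackAll 𝒢 d ∧ ¬ StackAll 𝒢 (d + 1)

/-- The tree depth of `G` is at most `h`: there is a rooted forest on the vertex
set of `G` (given by a parent function whose fixed points are the roots) of height
at most `h` whose (ancestor-descendant) closure contains all edges of `G`. -/
def TreeDepthLE {α : Type} (G : SimpleGraph α) (h : ℕ) : Prop :=
  ∃ par : α → α,
    (∀ v : α, par (par^[h] v) = par^[h] v) ∧
    (∀ u v : α, G.Adj u v → (∃ k : ℕ, par^[k] u = v) ∨ (∃ k : ℕ, par^[k] v = u))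

/-- The class `𝒢` has bounded tree depth. -/
def HasBoundedTreeDepth (𝒢 : Set FinGraph) : Prop :=
  ∃ h : ℕ, ∀ G ∈ 𝒢, TreeDepthLE G.G h

/-- The class `𝒢` has bounded treewidth (via tree decompositions). -/
def HasBoundedTreewidth (𝒢 : Set FinGraph) : Prop :=
  ∃ w : ℕ, ∀ G ∈ 𝒢, ∃ H : FinGraph, H.G.IsTree ∧
    ∃ B : Fin H.n → Set (Fin G.n), IsDecomposition G.G H.G B ∧ ∀ h, (B h).ncard ≤ w + 1

/-- The class `𝒢` has bounded pathwidth (via path decompositions). -/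
def HasBoundedPathwidth (𝒢 : Set FinGraph) : Prop :=
  ∃ w : ℕ, ∀ G ∈ 𝒢, ∃ H : FinGraph, H ∈ classP ∧
    ∃ B : Fin H.n → Set (Fin G.n), IsDecomposition G.G H.G B ∧ ∀ h, (B h).ncard ≤ w + 1

/-- A finite rooted tree. -/
structure RootedFinTree where
  n : ℕ
  G : SimpleGraph (Fin n)
  isTree : G.IsTree
  root : Fin n

/-- `c` is a child of `p` in the rooted tree `T`. -/
def RootedFinTree.IsChild (T : RootedFinTree) (p c : Fin T.n) : Prop :=
  T.G.Adj p c ∧ T.G.dist T.root c = T.G.dist T.root p + 1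

/-- `a` is an ancestor of `v` in the rooted tree `T` (i.e. `a` lies on the unique
path from the root to `v`). -/
def RootedFinTree.Ancestor (T : RootedFinTree) (a v : Fin T.n) : Prop :=
  T.G.dist T.root v = T.G.dist T.root a + T.G.dist a v

/-- `(μ m)_{m}` is a nice `M`-deconstruction of `G`, for rooted trees `M`, `G`. -/
def IsNiceDecon (M G : RootedFinTree) (μ : Fin M.n → Set (Fin G.n)) : Prop :=
  IsDeconstruction G.G M.G μ ∧
  IsMinorMap M.G G.G μ ∧
  G.root ∈ μ M.root ∧
  (∀ (m m' : Fin M.n) (g g' : Fin G.n),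
    M.IsChild m m' → g ∈ μ m → g' ∈ μ m' → G.G.Adj g g' → G.IsChild g g')

/-- The node `u` of the rooted tree `T` has property `P(d,k)`. -/
def PropP (T : RootedFinTree) (k : ℕ) : ℕ → Fin T.n → Prop
  | 0, _ => True
  | d + 1, u => ∃ s : Finset (Fin T.n), s.card = k ∧
      (∀ v ∈ s, T.Ancestor u v) ∧
      (∀ v ∈ s, ∀ w ∈ s, v ≠ w → ¬ T.Ancestor v w ∧ ¬ T.Ancestor w v) ∧
      (∀ v ∈ s, PropP T k d v)

def myInduceHom {β : Type} (H : SimpleGraph β) {s t : Set β} (hst : s ⊆ t) :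
    H.induce s →g H.induce t where
  toFun v := ⟨v.1, hst v.2⟩
  map_rel' := fun hab => hab


/-- If `S` induces a connected subgraph of `G` and `B` is an
`H`-deconstruction of `G`, then `{h | S ∩ B h ≠ ∅}` induces a connected
subgraph of `H`. -/
theorem inheriting_connectivity {α β : Type} [Fintype α] [Fintype β]
    (G : SimpleGraph α) (H : SimpleGraph β)
    (S : Set α) (hS : ConnSet G S)
    (B : β → Set α) (hB : IsDeconstruction G H B) :
    ConnSet H {h | (S ∩ B h).Nonempty} := by
  obtain ⟨hcov, hconn⟩ := hB
  set T : Set β := {h | (S ∩ B h).Nonempty} with hT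
  have hsub : ∀ g, g ∈ S → {h | g ∈ B h} ⊆ T := fun g hg h hh => ⟨g, hg, hh⟩
  have hbag : ∀ g : α, ∃ h, g ∈ B h := by
    intro g
    obtain ⟨⟨h, hh⟩⟩ := (hconn g).nonempty
    exact ⟨h, hh⟩
  -- reach within same vertex g ∈ S
  have reach1 : ∀ g (hg : g ∈ S) h h' (hh : g ∈ B h) (hh' : g ∈ B h'),
      (H.induce T).Reachable ⟨h, hsub g hg hh⟩ ⟨h', hsub g hg hh'⟩ := by
    intro g hg h h' hh hh'
    have := (hconn g).preconnected ⟨h, hh⟩ ⟨h', hh'⟩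
    exact this.map (myInduceHom H (hsub g hg))
  -- edge step
  have reach2 : ∀ g g' (hg : g ∈ S) (hg' : g' ∈ S), G.Adj g g' →
      ∀ h h' (hh : g ∈ B h) (hh' : g' ∈ B h'),
      (H.induce T).Reachable ⟨h, hsub g hg hh⟩ ⟨h', hsub g' hg' hh'⟩ := by
    intro g g' hg hg' hadj h h' hh hh'
    obtain ⟨a, b, hab, hga, hg'b⟩ := hcov g g' (Or.inr hadj)
    -- pick bag containing g among {a,b}, bag containing g' among {a,b}
    have key : ∀ (x y : β), g ∈ B x → g' ∈ B y → (x = a ∨ x = b) → (y = a ∨ y = b) →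
        (H.induce T).Reachable ⟨h, hsub g hg hh⟩ ⟨h', hsub g' hg' hh'⟩ := by
      intro x y hx hy hxab hyab
      refine (reach1 g hg h x hh hx).trans (Reachable.trans ?_ (reach1 g' hg' y h' hy hh'))
      have hxT : x ∈ T := hsub g hg hx
      have hyT : y ∈ T := hsub g' hg' hy
      rcases hab with heq | hAdj
      · have : x = y := by rcases hxab with rfl | rfl <;> rcases hyab with rfl | rfl <;> simp [heq]
        subst this; rfl
      · rcases hxab with rfl | rfl <;> rcases hyab with rfl | rfl
        · rfl
        · exact Adj.reachable (by exact hAdj)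
        · exact Adj.reachable (by exact hAdj.symm)
        · rfl
    rcases hga with hga | hga <;> rcases hg'b with hg'b | hg'b
    · exact key a a hga hg'b (Or.inl rfl) (Or.inl rfl)
    · exact key a b hga hg'b (Or.inl rfl) (Or.inr rfl)
    · exact key b a hga hg'b (Or.inr rfl) (Or.inl rfl)
    · exact key b b hga hg'b (Or.inr rfl) (Or.inr rfl)
  -- main: walk induction
  have main : ∀ (u v : S), (G.induce S).Walk u v →
      ∀ h h' (hh : (u : α) ∈ B h) (hh' : (v : α) ∈ B h'),
      (H.induce T).Reachable ⟨h, hsub u u.2 hh⟩ ⟨h', hsub v v.2 hh'⟩ := by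
    intro u v w
    induction w with
    | @nil x => intro h h' hh hh'; exact reach1 _ x.2 h h' hh hh'
    | @cons x y z hxy p ih =>
      intro h h' hh hh'
      obtain ⟨hm, hmm⟩ := hbag (y : α)
      exact (reach2 x y x.2 y.2 hxy h hm hh hmm).trans (ih hm h' hmm hh')
  have hne : (H.induce T).Connected := by
    obtain ⟨⟨g, hg⟩⟩ := hS.nonempty
    obtain ⟨h, hh⟩ := hbag g
    haveI : Nonempty T := ⟨⟨h, hsub g hg hh⟩⟩
    refine ⟨fun a b => ?_⟩
    obtain ⟨h₁, hh₁⟩ := a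
    obtain ⟨h₂, hh₂⟩ := b
    obtain ⟨g₁, hg₁S, hg₁B⟩ := hh₁
    obtain ⟨g₂, hg₂S, hg₂B⟩ := hh₂
    obtain ⟨w⟩ := hS.preconnected (⟨g₁, hg₁S⟩ : S) ⟨g₂, hg₂S⟩
    exact main ⟨g₁, hg₁S⟩ ⟨g₂, hg₂S⟩ w h₁ h₂ hg₁B hg₂B
  exact hne
end

section
/- Let G, H and I be finite simple graphs. If G has an H-deconstruction of width ≤ v and H has an I-deconstruction of width ≤ w, then G has an I-deconstruction of width ≤ vw. Explicitly, if (B_h)_{h ∈ V(H)} is an H-deconstruction of G and (C_i)_{i ∈ V(I)} is an I-deconstruction of H, then (⋃_{h ∈ C_i} B_h)_{i ∈ V(I)} is an I-deconstruction of G. -/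
open SimpleGraph

private lemma reach_mono {γ : Type} (I : SimpleGraph γ) {s t : Set γ} (hst : s ⊆ t)
    {a b : γ} (ha : a ∈ s) (hb : b ∈ s)
    (h : (I.induce s).Reachable ⟨a, ha⟩ ⟨b, hb⟩) :
    (I.induce t).Reachable ⟨a, hst ha⟩ ⟨b, hst hb⟩ := by
  have := h.map (I.induceHomOfLE hst).toHom
  exact this

/-- composing an `H`-deconstruction of `G` of width `≤ v` with an
`I`-deconstruction of `H` of width `≤ w` yields the explicit `I`-deconstruction
`(⋃_{h ∈ C i} B h)_i` of `G`, of width `≤ v * w`. -/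
theorem compose_deconstructions {α β γ : Type} [Fintype α] [Fintype β] [Fintype γ]
    (G : SimpleGraph α) (H : SimpleGraph β) (I : SimpleGraph γ) (v w : ℕ)
    (B : β → Set α) (hB : IsDeconstruction G H B) (hBw : DeconWidthLE H B v)
    (C : γ → Set β) (hC : IsDeconstruction H I C) (hCw : DeconWidthLE I C w) :
    IsDeconstruction G I (fun i => ⋃ h ∈ C i, B h) ∧
      DeconWidthLE I (fun i => ⋃ h ∈ C i, B h) (v * w) := by
  classical
  set D : γ → Set α := fun i => ⋃ h ∈ C i, B h with hD
  have hDmem : ∀ (i : γ) (g : α), g ∈ D i ↔ ∃ h, h ∈ C i ∧ g ∈ B h := by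
    intro i g; simp [hD]
  refine ⟨⟨?_, ?_⟩, ?_⟩
  · -- coverage
    intro g g' hgg'
    obtain ⟨h, h', hhh', hg, hg'⟩ := hB.1 g g' hgg'
    obtain ⟨i, i', hii', hi, hi'⟩ := hC.1 h h' hhh'
    refine ⟨i, i', hii', ?_, ?_⟩
    · rcases hg with hg | hg
      · rcases hi with hi | hi
        · exact Or.inl ((hDmem i g).2 ⟨h, hi, hg⟩)
        · exact Or.inr ((hDmem i' g).2 ⟨h, hi, hg⟩)
      · rcases hi' with hi' | hi'
        · exact Or.inl ((hDmem i g).2 ⟨h', hi', hg⟩)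
        · exact Or.inr ((hDmem i' g).2 ⟨h', hi', hg⟩)
    · rcases hg' with hg' | hg'
      · rcases hi with hi | hi
        · exact Or.inl ((hDmem i g').2 ⟨h, hi, hg'⟩)
        · exact Or.inr ((hDmem i' g').2 ⟨h, hi, hg'⟩)
      · rcases hi' with hi' | hi'
        · exact Or.inl ((hDmem i g').2 ⟨h', hi', hg'⟩)
        · exact Or.inr ((hDmem i' g').2 ⟨h', hi', hg'⟩)
  · -- connectivity
    intro g
    set S : Set γ := {i | g ∈ D i} with hS
    have hSmem : ∀ i : γ, i ∈ S ↔ ∃ h, h ∈ C i ∧ g ∈ B h := fun i => hDmem i g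
    set Hg : Set β := {h | g ∈ B h} with hHg
    have hHgconn : (H.induce Hg).Connected := hB.2 g
    -- T_h ⊆ S for h ∈ Hg, and reachability within T_h
    have hTsub : ∀ h : β, g ∈ B h → {i | h ∈ C i} ⊆ S := by
      intro h hgB i hi
      exact (hSmem i).2 ⟨h, hi, hgB⟩
    have hTreach : ∀ (h : β) (hgB : g ∈ B h) (i i' : γ) (hi : h ∈ C i) (hi' : h ∈ C i'),
        (I.induce S).Reachable ⟨i, hTsub h hgB hi⟩ ⟨i', hTsub h hgB hi'⟩ := by
      intro h hgB i i' hi hi'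
      have hconn := hC.2 h
      have := hconn.preconnected ⟨i, hi⟩ ⟨i', hi'⟩
      exact reach_mono I (hTsub h hgB) hi hi' this
    -- existence of a bag containing a given h
    have hEx : ∀ h : β, ∃ i : γ, h ∈ C i := by
      intro h
      obtain ⟨i, i', _, hi, _⟩ := hC.1 h h (Or.inl rfl)
      rcases hi with hi | hi
      exacts [⟨i, hi⟩, ⟨i', hi⟩]
    -- step lemma: reflAdj of bags h h'
    have hStep : ∀ (h h' : β) (_ : reflAdj H h h') (hgB : g ∈ B h) (hgB' : g ∈ B h')
        (i i' : γ) (hi : h ∈ C i) (hi' : h' ∈ C i'),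
        (I.induce S).Reachable ⟨i, hTsub h hgB hi⟩ ⟨i', hTsub h' hgB' hi'⟩ := by
      intro h h' hhh' hgB hgB' i i' hi hi'
      obtain ⟨j, j', hjj', hj, hj'⟩ := hC.1 h h' hhh'
      -- pick jh containing h, jh' containing h'
      obtain ⟨jh, hjh, hjhm⟩ : ∃ jh, h ∈ C jh ∧ (jh = j ∨ jh = j') := by
        rcases hj with hj | hj
        exacts [⟨j, hj, Or.inl rfl⟩, ⟨j', hj, Or.inr rfl⟩]
      obtain ⟨jh', hjh', hjhm'⟩ : ∃ jh', h' ∈ C jh' ∧ (jh' = j ∨ jh' = j') := by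
        rcases hj' with hj' | hj'
        exacts [⟨j, hj', Or.inl rfl⟩, ⟨j', hj', Or.inr rfl⟩]
      have r1 : (I.induce S).Reachable ⟨i, hTsub h hgB hi⟩ ⟨jh, hTsub h hgB hjh⟩ :=
        hTreach h hgB i jh hi hjh
      have r3 : (I.induce S).Reachable ⟨jh', hTsub h' hgB' hjh'⟩ ⟨i', hTsub h' hgB' hi'⟩ :=
        hTreach h' hgB' jh' i' hjh' hi'
      have r2 : (I.induce S).Reachable ⟨jh, hTsub h hgB hjh⟩ ⟨jh', hTsub h' hgB' hjh'⟩ := by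
        by_cases hjeq : jh = jh'
        · subst hjeq; rfl
        · have hadj : I.Adj jh jh' := by
            rcases hjj' with rfl | hadj
            · rcases hjhm with rfl | rfl <;> rcases hjhm' with rfl | rfl <;>
                simp_all
            · rcases hjhm with rfl | rfl <;> rcases hjhm' with rfl | rfl <;>
                first
                | exact hadj
                | exact hadj.symm
                | simp_all
          exact SimpleGraph.Adj.reachable (by exact hadj)
      exact (r1.trans r2).trans r3
    -- nonempty
    have hSne : S.Nonempty := by
      obtain ⟨⟨h, hgB⟩⟩ := hHgconn.nonempty
      obtain ⟨i, hi⟩ := hEx h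
      exact ⟨i, hTsub h hgB hi⟩
    have hMain : ∀ (a b : ↑Hg) (p : (H.induce Hg).Walk a b) (i₁ i₂ : γ)
        (h1 : a.1 ∈ C i₁) (h2 : b.1 ∈ C i₂),
        (I.induce S).Reachable ⟨i₁, hTsub a.1 a.2 h1⟩ ⟨i₂, hTsub b.1 b.2 h2⟩ := by
      intro a b p
      induction p with
      | @nil u =>
        intro i₁ i₂ h1 h2
        exact hTreach u.1 u.2 i₁ i₂ h1 h2
      | @cons a b c hab p ih =>
        intro i₁ i₂ h1 h2
        obtain ⟨im, him⟩ := hEx b.1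
        have hadj : H.Adj a.1 b.1 := hab
        have r1 := hStep a.1 b.1 (Or.inr hadj) a.2 b.2 i₁ im h1 him
        exact r1.trans (ih im i₂ him h2)
    rw [ConnSet, SimpleGraph.connected_iff]
    refine ⟨?_, ⟨⟨hSne.choose, hSne.choose_spec⟩⟩⟩
    rintro ⟨i₁, hi₁⟩ ⟨i₂, hi₂⟩
    obtain ⟨h₁, hh₁, hgB₁⟩ := (hSmem i₁).1 hi₁
    obtain ⟨h₂, hh₂, hgB₂⟩ := (hSmem i₂).1 hi₂
    obtain ⟨p⟩ := hHgconn.preconnected ⟨h₁, hgB₁⟩ ⟨h₂, hgB₂⟩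
    exact hMain ⟨h₁, hgB₁⟩ ⟨h₂, hgB₂⟩ p i₁ i₂ hh₁ hh₂
  · -- width
    intro i i' hii'
    have hkey : D i ∪ D i' = ↑((C i ∪ C i').toFinset.biUnion fun h => (B h).toFinset) := by
      ext g
      simp only [hD, Set.mem_union, Set.mem_iUnion, Finset.coe_biUnion, Finset.mem_coe,
        Set.mem_toFinset, Set.mem_iUnion, exists_prop]
      aesop
    rw [hkey, Set.ncard_coe_finset]
    calc ((C i ∪ C i').toFinset.biUnion fun h => (B h).toFinset).card
        ≤ ∑ h ∈ (C i ∪ C i').toFinset, (B h).toFinset.card := Finset.card_biUnion_le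
      _ ≤ ∑ _h ∈ (C i ∪ C i').toFinset, v := by
          refine Finset.sum_le_sum fun h _ => ?_
          have := hBw h h (Or.inl rfl)
          rw [Set.union_self] at this
          rwa [Set.ncard_eq_toFinset_card'] at this
      _ = (C i ∪ C i').toFinset.card * v := by rw [Finset.sum_const, smul_eq_mul]
      _ ≤ w * v := by
          have := hCw i i' hii'
          rw [Set.ncard_eq_toFinset_card'] at this
          exact Nat.mul_le_mul_right v this
      _ = v * w := Nat.mul_comm w v
end

section
/- For every class 𝒢 of finite simple graphs, 𝒢 ≡ minors(𝒢). In particular, whenever a finite simple graph M is a minor of a finite simple graph G, the graph M has a G-deconstruction of width ≤ 2 (namely (B_g)_{g ∈ V(G)} with B_g = {m : g ∈ μ(m)} for a minor map μ from M to G). -/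
open SimpleGraph

lemma connSet_singleton {α : Type} (G : SimpleGraph α) (g : α) : ConnSet G {g} := by
  have : Nonempty ({g} : Set α) := ⟨⟨g, rfl⟩⟩
  refine ⟨fun a b => ?_⟩
  have : a = b := Subtype.ext (a.2.trans b.2.symm)
  rw [this]

lemma connSet_congr {α : Type} (G : SimpleGraph α) {s t : Set α} (h : s = t)
    (hs : ConnSet G s) : ConnSet G t := h ▸ hs

lemma minor_decon {α β : Type} (M : SimpleGraph α) (G : SimpleGraph β)
    (μ : α → Set β) (hμ : IsMinorMap M G μ) :
    IsDeconstruction M G (fun g => {m | g ∈ μ m}) ∧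
    DeconWidthLE G (fun g => {m | g ∈ μ m}) 2 := by
  obtain ⟨hconn, hdisj, hadj⟩ := hμ
  have hne : ∀ m : α, (μ m).Nonempty := fun m => (hconn m).nonempty.elim fun v => ⟨v.1, v.2⟩
  have hsub : ∀ g : β, ({m | g ∈ μ m} : Set α).Subsingleton := by
    intro g m hm m' hm'
    by_contra h
    exact Set.disjoint_left.mp (hdisj m m' h) hm hm'
  have hcard : ∀ g : β, ({m | g ∈ μ m} : Set α).ncard ≤ 1 := by
    intro g
    rcases (hsub g).eq_empty_or_singleton with h | ⟨x, h⟩ <;> simp [h]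
  refine ⟨⟨?_, ?_⟩, ?_⟩
  · rintro m m' (rfl | hmm')
    · obtain ⟨g, hg⟩ := hne m
      exact ⟨g, g, Or.inl rfl, Or.inl hg, Or.inl hg⟩
    · obtain ⟨g, hg, g', hg', hgg'⟩ := hadj m m' hmm'
      exact ⟨g, g', Or.inr hgg', Or.inl hg, Or.inr hg'⟩
  · intro m
    exact connSet_congr G (by ext g; simp) (hconn m)
  · intro g g' _
    calc ({m | g ∈ μ m} ∪ {m | g' ∈ μ m}).ncard
        ≤ ({m | g ∈ μ m} : Set α).ncard + ({m | g' ∈ μ m} : Set α).ncard :=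
          Set.ncard_union_le _ _
      _ ≤ 2 := by have := hcard g; have := hcard g'; omega

lemma self_minor (G : FinGraph) : IsMinor G G := by
  refine ⟨fun m => {m}, fun m => connSet_singleton _ _, ?_, ?_⟩
  · intro m m' h
    simpa [Set.disjoint_singleton_left] using h
  · intro m m' h
    exact ⟨m, rfl, m', rfl, h⟩

/-- every class of finite simple graphs is `≡`-equivalent to the
class of its minors; in particular, whenever `μ` is a minor map from `M` to `G`,
the family `({m | g ∈ μ m})_{g ∈ V(G)}` is a `G`-deconstruction of `M` of width
at most `2`. -/
theorem equiv_with_minors :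
    (∀ 𝒢 : Set FinGraph, DeconEquiv 𝒢 (minorsCl 𝒢)) ∧
    (∀ (α β : Type) [Fintype α] [Fintype β] (M : SimpleGraph α)
      (G : SimpleGraph β) (μ : α → Set β), IsMinorMap M G μ →
        IsDeconstruction M G (fun g => {m | g ∈ μ m}) ∧
        DeconWidthLE G (fun g => {m | g ∈ μ m}) 2) := by
  constructor
  · intro 𝒢
    constructor
    · refine ⟨2, fun G hG => ⟨G, ⟨G, hG, self_minor G⟩, fun g => {g}, ⟨?_, ?_⟩, ?_⟩⟩
      · rintro g g' h
        exact ⟨g, g', h, Or.inl rfl, Or.inr rfl⟩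
      · intro g
        exact connSet_congr G.G (by ext h; simp [eq_comm]) (connSet_singleton G.G g)
      · intro h h' _
        calc ({h} ∪ {h'} : Set (Fin G.n)).ncard ≤ ({h} : Set (Fin G.n)).ncard + ({h'} : Set (Fin G.n)).ncard :=
              Set.ncard_union_le _ _
          _ ≤ 2 := by simp
    · refine ⟨2, fun M hM => ?_⟩
      obtain ⟨G, hG, μ, hμ⟩ := hM
      obtain ⟨h1, h2⟩ := minor_decon M.G G.G μ hμ
      exact ⟨G, hG, fun g => {m | g ∈ μ m}, h1, h2⟩
  · intro α β _ _ M G μ hμ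
    exact minor_decon M G μ hμ
end

section
/- Let G and H be finite simple graphs and w ≥ 1. (1) Every H-decomposition of G is also an H-deconstruction of G. (2) If H is a tree and G has an H-deconstruction in which every bag has size ≤ w, then G has an H-decomposition in which every bag has size ≤ 2w. Consequently, when ℋ is a class of finite trees, a class 𝒢 satisfies 𝒢 ≼ ℋ if and only if 𝒢 has ℋ-decompositions of bounded width. -/
open SimpleGraph

section Aux
variable {β : Type} {H : SimpleGraph β} {r : β}

lemma aux_exists_sp (hc : H.Connected) (h : β) :
    ∃ p : H.Walk h r, p.IsPath ∧ p.length = H.dist r h := by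
  obtain ⟨p, hp, hl⟩ := (hc h r).exists_path_of_dist
  exact ⟨p, hp, hl.trans (SimpleGraph.dist_comm)⟩

lemma aux_dist_lt_of_mem_support {h : β} {p : H.Walk h r}
    (hp : p.length = H.dist r h) {h' : β} (hm : h' ∈ p.support) (hne : h' ≠ h) :
    H.dist r h' < H.dist r h := by
  classical
  have hspec := congrArg Walk.length (p.take_spec hm)
  rw [Walk.length_append] at hspec
  have h1 : 1 ≤ (p.takeUntil h' hm).length := by
    rcases Nat.eq_zero_or_pos (p.takeUntil h' hm).length with h0 | h0
    · exact absurd (Walk.eq_of_length_eq_zero h0) (Ne.symm hne)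
    · exact h0
  have h2 : H.dist r h' ≤ (p.dropUntil h' hm).length := by
    rw [SimpleGraph.dist_comm]
    exact SimpleGraph.dist_le _
  omega

lemma aux_dist_ne (hT : H.IsTree) {h h' : β} (hadj : H.Adj h h') :
    H.dist r h ≠ H.dist r h' := by
  intro heq
  have hc := hT.isConnected
  obtain ⟨P, hP, hPl⟩ := aux_exists_sp (r := r) hc h
  obtain ⟨P', hP', hP'l⟩ := aux_exists_sp (r := r) hc h'
  have hns : h' ∉ P.support := by
    intro hm
    have := aux_dist_lt_of_mem_support hPl hm hadj.ne'
    omega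
  have hQ : (Walk.cons hadj.symm P).IsPath := (Walk.cons_isPath_iff _ _).2 ⟨hP, hns⟩
  have := isAcyclic_iff_path_unique.mp hT.IsAcyclic
    (⟨Walk.cons hadj.symm P, hQ⟩ : H.Path h' r) ⟨P', hP'⟩
  have hlen := congrArg (fun q : H.Path h' r => q.1.length) this
  simp only [Walk.length_cons] at hlen
  omega

lemma aux_parent_unique (hT : H.IsTree) {h h' x : β}
    (hadj : H.Adj h h') (hadjx : H.Adj x h')
    (hdx : H.dist r x = H.dist r h) (hs : H.dist r h' = H.dist r h + 1) :
    x = h := by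
  have hc := hT.isConnected
  obtain ⟨P, hP, hPl⟩ := aux_exists_sp (r := r) hc h
  obtain ⟨Px, hPx, hPxl⟩ := aux_exists_sp (r := r) hc x
  have hns : h' ∉ P.support := by
    intro hm
    have := aux_dist_lt_of_mem_support hPl hm hadj.ne'
    omega
  have hnsx : h' ∉ Px.support := by
    intro hm
    have := aux_dist_lt_of_mem_support hPxl hm hadjx.ne'
    omega
  have hQ1 : (Walk.cons hadj.symm P).IsPath := (Walk.cons_isPath_iff _ _).2 ⟨hP, hns⟩
  have hQ2 : (Walk.cons hadjx.symm Px).IsPath := (Walk.cons_isPath_iff _ _).2 ⟨hPx, hnsx⟩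
  have heq := isAcyclic_iff_path_unique.mp hT.IsAcyclic
    (⟨Walk.cons hadjx.symm Px, hQ2⟩ : H.Path h' r) ⟨Walk.cons hadj.symm P, hQ1⟩
  have := congrArg (fun q : H.Path h' r => q.1.getVert 1) heq
  simpa using this

lemma aux_exists_step (hc : H.Connected) {h : β} (hne : h ≠ r) :
    ∃ p : β, H.Adj p h ∧ H.dist r p + 1 = H.dist r h := by
  obtain ⟨P, hPl⟩ := (hc h r).exists_walk_length_eq_dist
  have hd : 0 < H.dist r h := by
    rw [SimpleGraph.dist_comm]
    exact hc.pos_dist_of_ne hne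
  have hPl' : P.length = H.dist r h := by rw [hPl, SimpleGraph.dist_comm]
  have hnn : ¬ P.Nil := by
    rw [Walk.not_nil_iff_lt_length]; omega
  obtain ⟨x, e, q, hq⟩ := Walk.not_nil_iff.mp hnn
  have hql : q.length + 1 = H.dist r h := by
    rw [← hPl', hq, Walk.length_cons]
  have h2 : H.dist r x ≤ q.length := by
    rw [SimpleGraph.dist_comm]; exact SimpleGraph.dist_le q
  have h3 : H.dist r h ≤ H.dist r x + 1 := by
    obtain ⟨wlk, hwlk⟩ := hc.exists_walk_length_eq_dist r x
    have := SimpleGraph.dist_le (wlk.concat e.symm)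
    rw [Walk.length_concat, hwlk] at this
    exact this
  exact ⟨x, e.symm, by omega⟩

lemma aux_tree_parent (hT : H.IsTree) :
    ∃ par : β → β, (∀ h, par h = h ∨ H.Adj (par h) h) ∧
      (∀ h h', H.Adj h h' → par h = h' ∨ par h' = h) := by
  classical
  have hc := hT.isConnected
  obtain ⟨r⟩ := hc.nonempty
  have step : ∀ h : β, ∃ p : β,
      (h = r → p = h) ∧ (h ≠ r → H.Adj p h ∧ H.dist r p + 1 = H.dist r h) := by
    intro h
    by_cases hh : h = r
    · exact ⟨h, fun _ => rfl, fun c => absurd hh c⟩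
    · obtain ⟨p, hp1, hp2⟩ := aux_exists_step hc hh
      exact ⟨p, fun c => absurd c hh, fun _ => ⟨hp1, hp2⟩⟩
  choose par hpar using step
  refine ⟨par, ?_, ?_⟩
  · intro h
    by_cases hh : h = r
    · exact Or.inl ((hpar h).1 hh)
    · exact Or.inr ((hpar h).2 hh).1
  · intro h h' hadj
    have hne : H.dist r h ≠ H.dist r h' := aux_dist_ne hT hadj
    have ht1 : H.dist r h' ≤ H.dist r h + 1 := by
      have := hc.dist_triangle (u := r) (v := h) (w := h')
      have h1 : H.dist h h' = 1 := SimpleGraph.dist_eq_one_iff_adj.mpr hadj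
      omega
    have ht2 : H.dist r h ≤ H.dist r h' + 1 := by
      have := hc.dist_triangle (u := r) (v := h') (w := h)
      have h1 : H.dist h' h = 1 := SimpleGraph.dist_eq_one_iff_adj.mpr hadj.symm
      omega
    rcases Nat.lt_or_ge (H.dist r h) (H.dist r h') with hlt | hge
    · right
      have hsucc : H.dist r h' = H.dist r h + 1 := by omega
      have hh'r : h' ≠ r := by
        intro e; subst e
        rw [SimpleGraph.dist_self] at hsucc; omega
      obtain ⟨ha, hd⟩ := (hpar h').2 hh'r
      exact aux_parent_unique hT hadj ha (by omega) hsucc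
    · left
      have hsucc : H.dist r h = H.dist r h' + 1 := by omega
      have hhr : h ≠ r := by
        intro e; subst e
        rw [SimpleGraph.dist_self] at hsucc; omega
      obtain ⟨ha, hd⟩ := (hpar h).2 hhr
      exact aux_parent_unique hT hadj.symm ha (by omega) hsucc

end Aux

section Main
variable {α β : Type}

lemma decomp_to_decon (G : SimpleGraph α) (H : SimpleGraph β) (B : β → Set α)
    (hB : IsDecomposition G H B) : IsDeconstruction G H B := by
  refine ⟨fun g g' hgg => ?_, hB.2⟩
  obtain ⟨h, hg, hg'⟩ := hB.1 g g' hgg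
  exact ⟨h, h, Or.inl rfl, Or.inl hg, Or.inl hg'⟩

lemma decon_to_decomp [Fintype α] (G : SimpleGraph α) (H : SimpleGraph β) (w : ℕ)
    (hT : H.IsTree) (B : β → Set α) (hB : IsDeconstruction G H B)
    (hsz : ∀ h, (B h).ncard ≤ w) :
    ∃ C : β → Set α, IsDecomposition G H C ∧ ∀ h, (C h).ncard ≤ 2 * w := by
  obtain ⟨par, hpar1, hpar2⟩ := aux_tree_parent hT
  refine ⟨fun h => B h ∪ B (par h), ⟨?_, ?_⟩, ?_⟩
  · intro g g' hgg
    obtain ⟨h, h', hhh, hg, hg'⟩ := hB.1 g g' hgg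
    rcases hhh with rfl | hadj
    · rw [Set.union_self] at hg hg'
      exact ⟨h, Or.inl hg, Or.inl hg'⟩
    · rcases hpar2 h h' hadj with hp | hp
      · refine ⟨h, ?_, ?_⟩ <;>
        · show _ ∈ B h ∪ B (par h)
          rw [hp]; assumption
      · refine ⟨h', ?_, ?_⟩ <;>
        · show _ ∈ B h' ∪ B (par h')
          rw [hp, Set.union_comm]; assumption
  · intro g
    have hS : (H.induce {h | g ∈ B h}).Connected := hB.2 g
    set S : Set β := {h | g ∈ B h} with hSdef
    set T : Set β := {h | g ∈ B h ∪ B (par h)} with hTdef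
    have hsub : S ⊆ T := fun h hh => Or.inl hh
    let hom : H.induce S →g H.induce T := ⟨fun v => ⟨v.1, hsub v.2⟩, fun {a b} h => h⟩
    obtain ⟨⟨h0, h0S⟩⟩ := hS.nonempty
    have claim : ∀ t (ht : t ∈ T),
        (H.induce T).Reachable ⟨t, ht⟩ ⟨h0, hsub h0S⟩ := by
      intro t ht
      by_cases htS : t ∈ S
      · exact Reachable.map hom (hS.preconnected ⟨t, htS⟩ ⟨h0, h0S⟩)
      · have hpt : g ∈ B (par t) := by
          rcases ht with h1 | h2
          · exact absurd h1 htS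
          · exact h2
        have hptS : par t ∈ S := hpt
        have hne : par t ≠ t := fun e => htS (e ▸ hptS)
        have hadj : H.Adj (par t) t := (hpar1 t).resolve_left hne
        have hadjT : (H.induce T).Adj ⟨par t, hsub hptS⟩ ⟨t, ht⟩ := hadj
        exact (hadjT.symm.reachable).trans
          (Reachable.map hom (hS.preconnected ⟨par t, hptS⟩ ⟨h0, h0S⟩))
    show (H.induce T).Connected
    have hpre : (H.induce T).Preconnected := fun a b =>
      (claim a.1 a.2).trans (claim b.1 b.2).symm
    haveI : Nonempty ↥T := ⟨⟨h0, hsub h0S⟩⟩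
    exact ⟨hpre⟩
  · intro h
    calc (B h ∪ B (par h)).ncard ≤ (B h).ncard + (B (par h)).ncard :=
          Set.ncard_union_le _ _
      _ ≤ w + w := add_le_add (hsz h) (hsz (par h))
      _ = 2 * w := by ring

end Main

/-- (1) every `H`-decomposition is an `H`-deconstruction;
(2) if `H` is a tree and `G` has an `H`-deconstruction with all bags of size
`≤ w` (`w ≥ 1`), then `G` has an `H`-decomposition with all bags of size `≤ 2w`;
(3) consequently, for a class `ℋ` of trees, `𝒢 ≼ ℋ` iff `𝒢` has
`ℋ`-decompositions of bounded width. -/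
theorem decomposition_vs_deconstruction :
    (∀ (α β : Type) [Fintype α] [Fintype β] (G : SimpleGraph α)
      (H : SimpleGraph β) (B : β → Set α),
        IsDecomposition G H B → IsDeconstruction G H B) ∧
    (∀ (α β : Type) [Fintype α] [Fintype β] (G : SimpleGraph α)
      (H : SimpleGraph β) (w : ℕ), 1 ≤ w → H.IsTree →
        (∃ B : β → Set α, IsDeconstruction G H B ∧ ∀ h, (B h).ncard ≤ w) →
        ∃ C : β → Set α, IsDecomposition G H C ∧ ∀ h, (C h).ncard ≤ 2 * w) ∧
    (∀ (𝒢 ℋ : Set FinGraph), (∀ H ∈ ℋ, H.G.IsTree) →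
        (DeconLE 𝒢 ℋ ↔
          ∃ w : ℕ, ∀ G ∈ 𝒢, ∃ H ∈ ℋ, ∃ B : Fin H.n → Set (Fin G.n),
            IsDecomposition G.G H.G B ∧ ∀ h, (B h).ncard ≤ w)) := by
  refine ⟨fun α β _ _ G H B hB => decomp_to_decon G H B hB, ?_, ?_⟩
  · rintro α β _ _ G H w _ hT ⟨B, hB, hsz⟩
    exact decon_to_decomp G H w hT B hB hsz
  · intro 𝒢 ℋ htrees
    constructor
    · rintro ⟨w, hw⟩
      refine ⟨2 * max w 1, fun G hG => ?_⟩
      obtain ⟨H, hH, B, hdec, hwd⟩ := hw G hG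
      have hb : ∀ h, (B h).ncard ≤ max w 1 := fun h => by
        have := hwd h h (Or.inl rfl)
        rw [Set.union_self] at this
        exact this.trans (le_max_left _ _)
      obtain ⟨C, hC, hCw⟩ := decon_to_decomp G.G H.G (max w 1) (htrees H hH) B hdec hb
      exact ⟨H, hH, C, hC, hCw⟩
    · rintro ⟨w, hw⟩
      refine ⟨2 * w, fun G hG => ?_⟩
      obtain ⟨H, hH, B, hdec, hb⟩ := hw G hG
      refine ⟨H, hH, B, decomp_to_decon _ _ _ hdec, fun h h' _ => ?_⟩
      calc (B h ∪ B h').ncard ≤ (B h).ncard + (B h').ncard := Set.ncard_union_le _ _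
        _ ≤ w + w := add_le_add (hb h) (hb h')
        _ = 2 * w := by ring
end

section
/- Suppose d, e ≥ 0 are constants and 𝒢 is a class of finite trees having stack depth d in which each tree has height ≤ e. Then 𝒢 ≼ 𝒯_d, i.e. there is a constant w such that every tree in 𝒢 has an H-deconstruction of width ≤ w for some tree H of height ≤ d. -/
open SimpleGraph

section TreeBasics

variable {V : Type} [DecidableEq V] (G : SimpleGraph V)

/-- ancestor relation in a rooted tree -/
def Anc (r a b : V) : Prop := G.dist r a + G.dist a b = G.dist r b

variable {G} (hG : G.IsTree)
include hG

lemma path_len {a b : V} (w : G.Walk a b) (hw : w.IsPath) : w.length = G.dist a b := by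
  obtain ⟨s, hs⟩ := hG.isConnected.exists_walk_length_eq_dist a b
  have hsp := s.isPath_of_length_eq_dist hs
  rw [(hG.existsUnique_path a b).unique hw hsp, hs]

lemma mem_support_iff_dist {a b x : V} (w : G.Walk a b) (hw : w.IsPath) :
    x ∈ w.support ↔ G.dist a x + G.dist x b = G.dist a b := by
  constructor
  · intro hx
    have hsplit := w.take_spec hx
    have hlen : (w.takeUntil x hx).length + (w.dropUntil x hx).length = w.length := by
      conv_rhs => rw [← hsplit]
      rw [SimpleGraph.Walk.length_append]
    have h1 : G.dist a x ≤ (w.takeUntil x hx).length := SimpleGraph.dist_le _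
    have h2 : G.dist x b ≤ (w.dropUntil x hx).length := SimpleGraph.dist_le _
    have h3 := path_len hG w hw
    have h4 := hG.isConnected.dist_triangle (u := a) (v := x) (w := b)
    omega
  · intro hx
    obtain ⟨w1, hw1⟩ := hG.isConnected.exists_walk_length_eq_dist a x
    obtain ⟨w2, hw2⟩ := hG.isConnected.exists_walk_length_eq_dist x b
    have hW : (w1.append w2).length = G.dist a b := by
      rw [SimpleGraph.Walk.length_append, hw1, hw2, hx]
    have hWp := (w1.append w2).isPath_of_length_eq_dist hW
    rw [(hG.existsUnique_path a b).unique hw hWp]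
    rw [SimpleGraph.Walk.mem_support_append_iff]
    exact Or.inl (SimpleGraph.Walk.end_mem_support w1)

lemma dist_eq_zero_iff' {a b : V} : G.dist a b = 0 ↔ a = b :=
  hG.isConnected.dist_eq_zero_iff

variable (r : V)

lemma anc_refl (a : V) : Anc G r a a := by simp [Anc]

lemma anc_root (a : V) : Anc G r r a := by simp [Anc]

lemma anc_trans {a b c : V} (h1 : Anc G r a b) (h2 : Anc G r b c) : Anc G r a c := by
  unfold Anc at *
  have t1 := hG.isConnected.dist_triangle (u := a) (v := b) (w := c)
  have t2 := hG.isConnected.dist_triangle (u := r) (v := a) (w := c)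
  omega

lemma anc_antisymm {a b : V} (h1 : Anc G r a b) (h2 : Anc G r b a) : a = b := by
  unfold Anc at *
  have : G.dist a b = 0 := by omega
  exact (dist_eq_zero_iff' hG).1 this

lemma anc_eq_of_dist_eq {a b : V} (h1 : Anc G r a b) (h2 : G.dist r a = G.dist r b) : a = b := by
  unfold Anc at h1
  exact (dist_eq_zero_iff' hG).1 (by omega)

/-- ancestors of a common vertex are comparable -/
lemma anc_total {a b v : V} (ha : Anc G r a v) (hb : Anc G r b v) :
    Anc G r a b ∨ Anc G r b a := by
  obtain ⟨w, hwl⟩ := hG.isConnected.exists_walk_length_eq_dist r v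
  have hwp := w.isPath_of_length_eq_dist hwl
  have hamem : a ∈ w.support := (mem_support_iff_dist hG w hwp).2 ha
  have hbmem : b ∈ w.support := (mem_support_iff_dist hG w hwp).2 hb
  have hsplit := w.take_spec hamem
  rw [← hsplit, SimpleGraph.Walk.mem_support_append_iff] at hbmem
  have htake : (w.takeUntil a hamem).IsPath := hwp.takeUntil hamem
  have hdrop : (w.dropUntil a hamem).IsPath := hwp.dropUntil hamem
  have hlen : (w.takeUntil a hamem).length + (w.dropUntil a hamem).length = w.length := by
    conv_rhs => rw [← hsplit]
    rw [SimpleGraph.Walk.length_append]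
  have hlt : (w.takeUntil a hamem).length = G.dist r a := path_len hG _ htake
  have hld : (w.dropUntil a hamem).length = G.dist a v := path_len hG _ hdrop
  rcases hbmem with hbt | hbd
  · right
    have := (mem_support_iff_dist hG _ htake).1 hbt
    unfold Anc at *
    omega
  · left
    have := (mem_support_iff_dist hG _ hdrop).1 hbd
    unfold Anc at *
    omega

/-- adjacent vertices have root-distance differing by one -/
lemma adj_dist_step {a b : V} (hab : G.Adj a b) :
    G.dist r b = G.dist r a + 1 ∨ G.dist r a = G.dist r b + 1 := by
  have h1 : G.dist r b ≤ G.dist r a + 1 := by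
    have := hG.isConnected.dist_triangle (u := r) (v := a) (w := b)
    have : G.dist a b ≤ 1 := by
      have : G.dist a b ≤ (SimpleGraph.Walk.cons hab SimpleGraph.Walk.nil).length :=
        SimpleGraph.dist_le _
      simpa using this
    omega
  have h2 : G.dist r a ≤ G.dist r b + 1 := by
    have := hG.isConnected.dist_triangle (u := r) (v := b) (w := a)
    have : G.dist b a ≤ 1 := by
      have : G.dist b a ≤ (SimpleGraph.Walk.cons hab.symm SimpleGraph.Walk.nil).length :=
        SimpleGraph.dist_le _
      simpa using this
    omega
  rcases Nat.lt_trichotomy (G.dist r a) (G.dist r b) with h | h | h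
  · left; omega
  · exfalso
    -- equal distances impossible for adjacent vertices in a tree
    obtain ⟨w, hwl⟩ := hG.isConnected.exists_walk_length_eq_dist r a
    have hwp := w.isPath_of_length_eq_dist hwl
    have hbns : b ∉ w.support := by
      intro hb
      have := (mem_support_iff_dist hG w hwp).1 hb
      have hba : G.dist b a ≠ 0 := fun h0 => G.ne_of_adj hab ((dist_eq_zero_iff' hG).1 h0).symm
      omega
    have hcp : (SimpleGraph.Walk.cons hab.symm w.reverse).IsPath := by
      rw [SimpleGraph.Walk.cons_isPath_iff]
      refine ⟨hwp.reverse, ?_⟩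
      rw [SimpleGraph.Walk.support_reverse, List.mem_reverse]
      exact hbns
    have := path_len hG _ hcp
    rw [SimpleGraph.Walk.length_cons, SimpleGraph.Walk.length_reverse, hwl] at this
    rw [show G.dist b r = G.dist r b from SimpleGraph.dist_comm] at this
    omega
  · right; omega

/-- existence and uniqueness of parents -/
lemma parent_exists_unique {v : V} (hv : v ≠ r) :
    ∃! q : V, G.Adj q v ∧ G.dist r v = G.dist r q + 1 := by
  obtain ⟨w, hwl⟩ := hG.isConnected.exists_walk_length_eq_dist r v
  have hwp := w.isPath_of_length_eq_dist hwl
  have : ∃ q, G.Adj q v ∧ G.dist r v = G.dist r q + 1 := by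
    cases hw : w.reverse with
    | nil =>
      exfalso
      have : w.length = 0 := by
        have := congrArg SimpleGraph.Walk.length hw
        rw [SimpleGraph.Walk.length_reverse] at this
        simpa using this
      rw [hwl] at this
      exact hv (((dist_eq_zero_iff' hG).1 (by omega)).symm)
    | cons hadj w' =>
      rename_i q
      refine ⟨q, hadj.symm, ?_⟩
      rcases adj_dist_step hG r hadj with h | h
      · -- dist r q = dist r v + 1 : impossible since q on shortest path
        exfalso
        have hq : q ∈ w.support := by
          have : q ∈ w.reverse.support := by rw [hw]; simp
          rw [SimpleGraph.Walk.support_reverse] at this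
          simpa using this
        have := (mem_support_iff_dist hG w hwp).1 hq
        have hqv : G.dist q v ≠ 0 := fun h0 => G.ne_of_adj hadj.symm ((dist_eq_zero_iff' hG).1 h0)
        omega
      · exact h
  obtain ⟨q, hq⟩ := this
  refine ⟨q, hq, ?_⟩
  intro q' hq'
  -- both q and q' are ancestors of v at the same distance
  have hancq : Anc G r q v := by
    unfold Anc
    have h1 : G.dist q v = 1 := by
      rw [SimpleGraph.dist_eq_one_iff_adj]; exact hq.1
    omega
  have hancq' : Anc G r q' v := by
    unfold Anc
    have h1 : G.dist q' v = 1 := by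
      rw [SimpleGraph.dist_eq_one_iff_adj]; exact hq'.1
    omega
  rcases anc_total hG r hancq' hancq with h | h
  · exact anc_eq_of_dist_eq hG r h (by omega)
  · exact (anc_eq_of_dist_eq hG r h (by omega)).symm

end TreeBasics
section ConnHelpers

variable {V : Type} [DecidableEq V] {G : SimpleGraph V}

lemma reach_induce {S : Set V} {x y : V} (w : G.Walk x y) (hw : ∀ z ∈ w.support, z ∈ S) :
    (G.induce S).Reachable ⟨x, hw x w.start_mem_support⟩ ⟨y, hw y w.end_mem_support⟩ := by
  induction w with
  | nil => rfl
  | cons h p ih =>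
    refine SimpleGraph.Reachable.trans ?_ (ih (fun z hz => hw z (by simp [hz])))
    exact SimpleGraph.Adj.reachable (by simpa using h)

lemma reach_induce_mono {S T : Set V} (hST : S ⊆ T) {x y : S}
    (h : (G.induce S).Reachable x y) :
    (G.induce T).Reachable ⟨x.1, hST x.2⟩ ⟨y.1, hST y.2⟩ := by
  obtain ⟨w⟩ := h
  induction w with
  | nil => rfl
  | cons h p ih =>
    exact SimpleGraph.Reachable.trans (SimpleGraph.Adj.reachable (by simpa using h)) ih

lemma connSet_of_pivot {S : Set V} {u : V} (hu : u ∈ S)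
    (h : ∀ x (hx : x ∈ S), (G.induce S).Reachable ⟨u, hu⟩ ⟨x, hx⟩) : ConnSet G S := by
  show (G.induce S).Connected
  haveI : Nonempty S := ⟨⟨u, hu⟩⟩
  exact SimpleGraph.Connected.mk (fun a b => (h a.1 a.2).symm.trans (h b.1 b.2))

lemma connSet_singleton_s5 (v : V) : ConnSet G {v} := by
  refine connSet_of_pivot (u := v) rfl ?_
  intro x hx
  cases hx
  rfl

lemma connSet_union {S T : Set V} (hS : ConnSet G S) (hT : ConnSet G T)
    (h : (S ∩ T).Nonempty) : ConnSet G (S ∪ T) := by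
  obtain ⟨u, huS, huT⟩ := h
  refine connSet_of_pivot (u := u) (Or.inl huS) ?_
  intro x hx
  rcases hx with hx | hx
  · exact reach_induce_mono Set.subset_union_left
      ((show (G.induce S).Connected from hS).preconnected ⟨u, huS⟩ ⟨x, hx⟩)
  · exact reach_induce_mono Set.subset_union_right
      ((show (G.induce T).Connected from hT).preconnected ⟨u, huT⟩ ⟨x, hx⟩)

variable (hG : G.IsTree)
include hG

lemma connSet_pathClosed {S : Set V} {u : V} (hu : u ∈ S)
    (h : ∀ x ∈ S, ∀ y, G.dist u y + G.dist y x = G.dist u x → y ∈ S) : ConnSet G S := by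
  refine connSet_of_pivot hu ?_
  intro x hx
  obtain ⟨w, hwl⟩ := hG.isConnected.exists_walk_length_eq_dist u x
  have hwp := w.isPath_of_length_eq_dist hwl
  have hsub : ∀ z ∈ w.support, z ∈ S := by
    intro z hz
    exact h x hx z ((mem_support_iff_dist hG w hwp).1 hz)
  exact reach_induce w hsub

/-- the vertex set of the unique path between two vertices -/
lemma connSet_pathset (a b : V) : ConnSet G {x | G.dist a x + G.dist x b = G.dist a b} := by
  refine connSet_pathClosed hG (u := a) (by simp) ?_
  intro x hx y hy
  simp only [Set.mem_setOf_eq] at hx ⊢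
  have t1 := hG.isConnected.dist_triangle (u := y) (v := x) (w := b)
  have t2 := hG.isConnected.dist_triangle (u := a) (v := y) (w := b)
  omega

lemma pathset_ncard (a b : V) :
    ({x | G.dist a x + G.dist x b = G.dist a b} : Set V).ncard ≤ G.dist a b + 1 := by
  obtain ⟨w, hwl⟩ := hG.isConnected.exists_walk_length_eq_dist a b
  have hwp := w.isPath_of_length_eq_dist hwl
  have hsub : {x | G.dist a x + G.dist x b = G.dist a b} ⊆ (w.support.toFinset : Set V) := by
    intro x hx
    simp only [Set.mem_setOf_eq] at hx
    simp only [Finset.coe_sort_coe, List.coe_toFinset, Set.mem_setOf_eq]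
    exact (mem_support_iff_dist hG w hwp).2 hx
  calc ({x | G.dist a x + G.dist x b = G.dist a b} : Set V).ncard
      ≤ (w.support.toFinset : Set V).ncard := Set.ncard_le_ncard hsub (Set.toFinite _)
    _ = w.support.toFinset.card := Set.ncard_coe_finset _
    _ ≤ w.support.length := List.toFinset_card_le _
    _ = G.dist a b + 1 := by rw [SimpleGraph.Walk.length_support, hwl]

end ConnHelpers
section GoodTheory

lemma kAry_adj {h k : ℕ} {a b : {l : List (Fin k) // l.length ≤ h}} :
    (kAryTree h k).Adj a b ↔ a ≠ b ∧ ((∃ i, b.1 = i :: a.1) ∨ (∃ i, a.1 = i :: b.1)) :=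
  SimpleGraph.fromRel_adj _ a b

variable {V : Type} [DecidableEq V]

/-- `v` carries a `kAryTree j k`-minor among its descendants, rooted at `v`. -/
def Good (G : SimpleGraph V) (r : V) (k j : ℕ) (v : V) : Prop :=
  ∃ μ : {l : List (Fin k) // l.length ≤ j} → Set V,
    IsMinorMap (kAryTree j k) G μ ∧ v ∈ μ ⟨[], by simp⟩ ∧
    ∀ t, μ t ⊆ {x | Anc G r v x}

lemma good_zero (G : SimpleGraph V) (r : V) (k : ℕ) (v : V) : Good G r k 0 v := by
  have hall : ∀ t : {l : List (Fin k) // l.length ≤ 0}, t = ⟨[], by simp⟩ := by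
    intro t
    exact Subtype.ext (List.eq_nil_of_length_eq_zero (Nat.le_zero.1 t.2))
  refine ⟨fun _ => {v}, ⟨fun _ => connSet_singleton_s5 v, ?_, ?_⟩, rfl, ?_⟩
  · intro m m' hne
    exact absurd ((hall m).trans (hall m').symm) hne
  · intro m m' hadj
    rw [kAry_adj] at hadj
    exact absurd ((hall m).trans (hall m').symm) hadj.1
  · intro t x hx
    cases hx
    simp [Anc]

lemma good_succ_imp {G : SimpleGraph V} {r : V} {k j : ℕ} {v : V}
    (h : Good G r k (j + 1) v) : Good G r k j v := by
  obtain ⟨μ, ⟨hconn, hdisj, hedge⟩, hroot, hsub⟩ := h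
  set ι : {l : List (Fin k) // l.length ≤ j} → {l : List (Fin k) // l.length ≤ j + 1} :=
    fun t => ⟨t.1, t.2.trans (Nat.le_succ j)⟩ with hι
  have hιinj : Function.Injective ι := by
    intro a b hab
    have h2 := congrArg Subtype.val hab
    exact Subtype.ext h2
  refine ⟨fun t => μ (ι t), ⟨fun t => hconn (ι t), ?_, ?_⟩, hroot, fun t => hsub (ι t)⟩
  · intro m m' hne
    exact hdisj (ι m) (ι m') (fun hc => hne (hιinj hc))
  · intro m m' hadj
    refine hedge (ι m) (ι m') ?_
    rw [kAry_adj] at hadj ⊢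
    exact ⟨fun hc => hadj.1 (hιinj hc), hadj.2⟩

lemma good_of_le {G : SimpleGraph V} {r : V} {k : ℕ} {v : V} {i j : ℕ} (hij : i ≤ j)
    (h : Good G r k j v) : Good G r k i v := by
  induction j with
  | zero => exact Nat.le_zero.1 hij ▸ h
  | succ j ih =>
    rcases Nat.lt_or_ge i (j + 1) with hlt | hge
    · exact ih (Nat.lt_succ_iff.1 hlt) (good_succ_imp h)
    · exact le_antisymm hij hge ▸ h

variable {G : SimpleGraph V} (hG : G.IsTree) (r : V)
include hG

lemma anc_mem_pathset {u v x : V} (huv : Anc G r u v)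
    (hx : G.dist u x + G.dist x v = G.dist u v) : Anc G r u x ∧ Anc G r x v := by
  unfold Anc at *
  have t1 := hG.isConnected.dist_triangle (u := r) (v := u) (w := x)
  have t2 := hG.isConnected.dist_triangle (u := r) (v := x) (w := v)
  omega

lemma good_anc_mono {k j : ℕ} {u v : V} (huv : Anc G r u v)
    (h : Good G r k j v) : Good G r k j u := by
  classical
  obtain ⟨μ, ⟨hconn, hdisj, hedge⟩, hroot, hsub⟩ := h
  set rt : {l : List (Fin k) // l.length ≤ j} := ⟨[], by simp⟩ with hrt
  set P : Set V := {x | G.dist u x + G.dist x v = G.dist u v} with hP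
  set F : {l : List (Fin k) // l.length ≤ j} → Set V :=
    fun t => if t = rt then μ t ∪ P else μ t with hF
  have hFsup : ∀ t, μ t ⊆ F t := by
    intro t x hx
    by_cases h' : t = rt
    · subst h'
      simp only [hF, if_pos rfl]
      exact Or.inl hx
    · simp only [hF, if_neg h']
      exact hx
  have hPanc : ∀ x ∈ P, Anc G r u x ∧ Anc G r x v := fun x hx => anc_mem_pathset hG r huv hx
  have hvP : v ∈ P := by simp [hP]
  refine ⟨F, ⟨?_, ?_, ?_⟩, ?_, ?_⟩
  · intro t
    by_cases h' : t = rt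
    · simp only [hF, h', if_pos rfl]
      refine connSet_union (hconn rt) (connSet_pathset hG u v) ⟨v, ?_, hvP⟩
      exact h' ▸ hroot
    · simpa [hF, h'] using hconn t
  · intro m m' hne
    have key : ∀ t, t ≠ rt → Disjoint P (μ t) := by
      intro t ht
      rw [Set.disjoint_left]
      intro x hxP hxt
      have h1 : Anc G r x v := (hPanc x hxP).2
      have h2 : Anc G r v x := hsub t hxt
      have : x = v := anc_antisymm hG r h1 h2
      subst this
      exact (Set.disjoint_left.1 (hdisj rt t (fun hc => ht hc.symm)) hroot) hxt
    by_cases hm : m = rt <;> by_cases hm' : m' = rt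
    · exact absurd (hm.trans hm'.symm) hne
    · subst hm
      simp only [hF, if_pos rfl, if_neg hm']
      exact Set.disjoint_union_left.2 ⟨hdisj rt m' hne, key m' hm'⟩
    · subst hm'
      simp only [hF, if_pos rfl, if_neg hm]
      exact (Set.disjoint_union_left.2 ⟨hdisj rt m hne.symm, key m hm⟩).symm
    · simpa [hF, hm, hm'] using hdisj m m' hne
  · intro m m' hadj
    obtain ⟨g, hg, g', hg', hgg'⟩ := hedge m m' hadj
    exact ⟨g, hFsup m hg, g', hFsup m' hg', hgg'⟩
  · show u ∈ F rt
    simp only [hF, if_pos rfl]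
    right
    simp [hP]
  · intro t x hx
    by_cases h' : t = rt
    · rw [hF] at hx
      simp only [h', if_pos rfl] at hx
      rcases hx with hx | hx
      · exact anc_trans hG r huv (hsub _ hx)
      · exact (hPanc x hx).1
    · simp only [hF, if_neg h'] at hx
      exact anc_trans hG r huv (hsub t hx)

end GoodTheory
section Combine

variable {V : Type} [DecidableEq V] {G : SimpleGraph V} (hG : G.IsTree) (r : V)
include hG

lemma dist_pos_of_ne' {a b : V} (h : a ≠ b) : 1 ≤ G.dist a b := by
  rcases Nat.eq_zero_or_pos (G.dist a b) with h0 | h0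
  · exact absurd ((dist_eq_zero_iff' hG).1 h0) h
  · exact h0

lemma good_combine {k j : ℕ} (hk : 1 ≤ k) {u : V} {s : Finset V} (hcard : s.card = k)
    (hanc : ∀ v ∈ s, Anc G r u v ∧ v ≠ u)
    (hinc : ∀ v ∈ s, ∀ w ∈ s, v ≠ w → ¬ Anc G r v w)
    (hgood : ∀ v ∈ s, Good G r k j v) :
    Good G r k (j + 1) u := by
  classical
  set e := s.equivFinOfCardEq hcard with he
  set f : Fin k → V := fun i => (e.symm i : V) with hf
  have hfs : ∀ i, f i ∈ s := fun i => (e.symm i).2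
  have hfinj : Function.Injective f := by
    intro a b hab
    exact e.symm.injective (Subtype.ext hab)
  choose μ hμ hroot hsub using fun i => hgood (f i) (hfs i)
  have hfu : ∀ i, Anc G r u (f i) := fun i => (hanc (f i) (hfs i)).1
  have hfne : ∀ i, f i ≠ u := fun i => (hanc (f i) (hfs i)).2
  have hdesc : ∀ i t x, x ∈ μ i t → Anc G r (f i) x := fun i t x hx => hsub i t hx
  have hdescu : ∀ i t x, x ∈ μ i t → Anc G r u x :=
    fun i t x hx => anc_trans hG r (hfu i) (hdesc i t x hx)
  have hdisj2 : ∀ i i' x, i ≠ i' → Anc G r (f i) x → Anc G r (f i') x → False := by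
    intro i i' x hne h1 h2
    have hne' : f i ≠ f i' := fun hc => hne (hfinj hc)
    rcases anc_total hG r h1 h2 with h | h
    · exact hinc (f i) (hfs i) (f i') (hfs i') hne' h
    · exact hinc (f i') (hfs i') (f i) (hfs i) hne'.symm h
  set R0 : Set V := {x | Anc G r u x ∧ ∃ i : Fin k, Anc G r x (f i) ∧ x ≠ f i} with hR0
  have i0 : Fin k := ⟨0, hk⟩
  have huR0 : u ∈ R0 := by
    refine ⟨anc_refl hG r u, i0, hfu i0, (hfne i0).symm⟩
  -- R0 is disjoint from the descendants of each f i
  have hR0disj : ∀ i x, x ∈ R0 → Anc G r (f i) x → False := by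
    rintro i x ⟨hux, i', hxi', hxne⟩ hix
    by_cases hii : i = i'
    · subst hii
      exact hxne (anc_antisymm hG r hxi' hix)
    · exact hdisj2 i i' (f i') (Ne.symm (fun a => hii a.symm))
        (anc_trans hG r hix hxi') (anc_refl hG r _)
  have hR0conn : ConnSet G R0 := by
    refine connSet_pathClosed hG huR0 ?_
    rintro x ⟨hux, i, hxi, hxne⟩ y hy
    have h1 := anc_mem_pathset hG r hux hy
    refine ⟨h1.1, i, anc_trans hG r h1.2 hxi, ?_⟩
    intro hc
    subst hc
    exact hxne (anc_antisymm hG r hxi h1.2)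
  -- the assembled branch sets
  set F : {l : List (Fin k) // l.length ≤ j + 1} → Set V :=
    fun l => if h : l.1 = [] then R0 else
      μ (l.1.getLast h) ⟨l.1.dropLast, by
        have h2 := l.2
        rw [List.length_dropLast]
        omega⟩ with hFdef
  have hFnil : ∀ (l : {l : List (Fin k) // l.length ≤ j + 1}) (h : l.1 = []), F l = R0 := by
    intro l h
    simp [hFdef, h]
  have hFcons : ∀ (l : {l : List (Fin k) // l.length ≤ j + 1}) (h : l.1 ≠ [])
      (i : Fin k) (t : {l : List (Fin k) // l.length ≤ j}),
      l.1.getLast h = i → l.1.dropLast = t.1 → F l = μ i t := by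
    intro l h i t h1 h2
    simp only [hFdef, dif_neg h]
    rw [h1]
    exact congrArg (μ i) (Subtype.ext h2)
  refine ⟨F, ⟨?_, ?_, ?_⟩, ?_, ?_⟩
  · -- connectivity
    intro t
    by_cases h : t.1 = []
    · rw [hFnil t h]; exact hR0conn
    · simp only [hFdef, dif_neg h]
      exact hμ _ |>.1 _
  · -- disjointness
    intro m m' hne
    have key : ∀ (a b : {l : List (Fin k) // l.length ≤ j + 1}) (ha : a.1 = []) (hb : b.1 ≠ []),
        Disjoint (F a) (F b) := by
      intro a b ha hb
      rw [hFnil a ha]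
      simp only [hFdef, dif_neg hb]
      rw [Set.disjoint_left]
      intro x hx hx'
      exact hR0disj _ x hx (hdesc _ _ x hx')
    by_cases hm : m.1 = [] <;> by_cases hm' : m'.1 = []
    · exact absurd (Subtype.ext (hm.trans hm'.symm)) hne
    · exact key m m' hm hm'
    · exact (key m' m hm' hm).symm
    · simp only [hFdef, dif_neg hm, dif_neg hm']
      by_cases hlast : m.1.getLast hm = m'.1.getLast hm'
      · rw [hlast]
        refine (hμ _).2.1 _ _ ?_
        intro hc
        apply hne
        have hdl : m.1.dropLast = m'.1.dropLast := congrArg Subtype.val hc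
        refine Subtype.ext ?_
        rw [← List.dropLast_append_getLast hm, ← List.dropLast_append_getLast hm', hdl, hlast]
      · rw [Set.disjoint_left]
        intro x hx hx'
        exact hdisj2 _ _ x hlast (hdesc _ _ x hx) (hdesc _ _ x hx')
  · -- edges
    have key : ∀ (a b : {l : List (Fin k) // l.length ≤ j + 1}) (i : Fin k), b.1 = i :: a.1 →
        ∃ g ∈ F a, ∃ g' ∈ F b, G.Adj g g' := by
      intro a b i hb
      have hbne : b.1 ≠ [] := by rw [hb]; exact List.cons_ne_nil _ _
      by_cases ha : a.1 = []
      · -- edge from the root piece to the i-th subtree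
        have hb1 : b.1 = [i] := by rw [hb, ha]
        have hlast : b.1.getLast hbne = i := by
          revert hbne
          rw [hb1]
          intro
          rfl
        have hdrop : b.1.dropLast = ([] : List (Fin k)) := by
          rw [hb1]
          simp
        have hFb : F b = μ i ⟨[], by simp⟩ := hFcons b hbne i ⟨[], by simp⟩ hlast hdrop
        -- the parent of f i is in R0
        have hfir : f i ≠ r := by
          intro hc
          have h1 := hfu i
          unfold Anc at h1
          rw [hc, SimpleGraph.dist_self] at h1
          have h2 : 1 ≤ G.dist u r := by
            rw [← hc]
            exact dist_pos_of_ne' hG ((hfne i).symm)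
          omega
        obtain ⟨q, ⟨hq1, hq2⟩, _⟩ := parent_exists_unique hG r hfir
        have hqfi : Anc G r q (f i) := by
          unfold Anc
          rw [SimpleGraph.dist_eq_one_iff_adj.2 hq1]
          omega
        have huq : Anc G r u q := by
          rcases anc_total hG r (hfu i) hqfi with h | h
          · exact h
          · -- Anc q u forces q = u
            have h1 := hfu i
            have h2 := hqfi
            have h3 : 1 ≤ G.dist u (f i) := dist_pos_of_ne' hG ((hfne i).symm)
            unfold Anc at h1 h2 h
            have hqu : q = u := (dist_eq_zero_iff' hG).1 (by omega)
            rw [hqu]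
            exact anc_refl hG r u
        have hqR0 : q ∈ R0 := by
          refine ⟨huq, i, hqfi, ?_⟩
          intro hc
          rw [hc] at hq2
          omega
        refine ⟨q, ?_, f i, ?_, hq1⟩
        · rw [hFnil a ha]; exact hqR0
        · rw [hFb]; exact hroot i
      · -- edge within the m-th subtree
        obtain ⟨y, ys, hys⟩ := List.exists_cons_of_ne_nil ha
        set m := a.1.getLast ha with hm
        have hbl : b.1.getLast hbne = m := by
          rw [hm]
          revert hbne
          rw [hb]
          intro hbne'
          exact List.getLast_cons ha
        have hbd : b.1.dropLast = i :: a.1.dropLast := by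
          rw [hb, hys, List.dropLast_cons₂]
        have hlen : a.1.dropLast.length ≤ j := by
          have := a.2
          rw [List.length_dropLast]
          omega
        have hlen2 : (i :: a.1.dropLast).length ≤ j := by
          have := b.2
          rw [hb] at this
          simp only [List.length_cons] at this
          rw [List.length_cons]
          have h3 : a.1.length = a.1.dropLast.length + 1 := by
            rw [List.length_dropLast]
            have : a.1.length ≠ 0 := by simpa using ha
            omega
          omega
        have hadj : (kAryTree j k).Adj ⟨a.1.dropLast, hlen⟩ ⟨i :: a.1.dropLast, hlen2⟩ := by
          rw [kAry_adj]
          constructor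
          · intro hc
            have := congrArg (List.length ∘ Subtype.val) hc
            simp at this
          · exact Or.inl ⟨i, rfl⟩
        obtain ⟨g, hg, g', hg', hgg'⟩ := (hμ m).2.2 _ _ hadj
        refine ⟨g, ?_, g', ?_, hgg'⟩
        · rw [hFcons a ha m ⟨a.1.dropLast, hlen⟩ rfl rfl]
          exact hg
        · rw [hFcons b hbne m ⟨i :: a.1.dropLast, hlen2⟩ hbl hbd]
          exact hg'
    intro a b hadj
    rw [kAry_adj] at hadj
    rcases hadj.2 with ⟨i, hi⟩ | ⟨i, hi⟩
    · exact key a b i hi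
    · obtain ⟨g, hg, g', hg', hgg'⟩ := key b a i hi
      exact ⟨g', hg', g, hg, hgg'.symm⟩
  · -- root membership
    show u ∈ F ⟨[], by simp⟩
    rw [hFnil _ rfl]
    exact huR0
  · -- descendants
    intro t x hx
    by_cases h : t.1 = []
    · rw [hFnil t h] at hx
      exact hx.1
    · simp only [hFdef, dif_neg h] at hx
      exact hdescu _ _ x hx

end Combine
section ParentTree

variable {V : Type} [Fintype V] [DecidableEq V]

lemma parent_adj (p : V → V) (r : V) {a b : V} :
    (SimpleGraph.fromRel (fun a b => a ≠ r ∧ p a = b)).Adj a b ↔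
      a ≠ b ∧ ((a ≠ r ∧ p a = b) ∨ (b ≠ r ∧ p b = a)) :=
  SimpleGraph.fromRel_adj _ a b

lemma parent_self_ne (p : V → V) (r : V) (m : V → ℕ)
    (hstep : ∀ v, v ≠ r → m (p v) < m v) {v : V} (hv : v ≠ r) : p v ≠ v := by
  intro hc
  have := hstep v hv
  rw [hc] at this
  omega

lemma parent_adj_parent (p : V → V) (r : V) (m : V → ℕ)
    (hstep : ∀ v, v ≠ r → m (p v) < m v) {v : V} (hv : v ≠ r) :
    (SimpleGraph.fromRel (fun a b => a ≠ r ∧ p a = b)).Adj v (p v) := by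
  rw [parent_adj]
  exact ⟨(parent_self_ne p r m hstep hv).symm, Or.inl ⟨hv, rfl⟩⟩

lemma parent_reach (p : V → V) (r : V) (m : V → ℕ)
    (hstep : ∀ v, v ≠ r → m (p v) < m v) (v : V) :
    (SimpleGraph.fromRel (fun a b => a ≠ r ∧ p a = b)).Reachable v r := by
  have key : ∀ (N : ℕ) (v : V), m v ≤ N →
      (SimpleGraph.fromRel (fun a b => a ≠ r ∧ p a = b)).Reachable v r := by
    intro N
    induction N with
    | zero =>
      intro v hv
      by_cases h : v = r
      · exact h ▸ SimpleGraph.Reachable.refl _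
      · exact absurd (hstep v h) (by omega)
    | succ N ih =>
      intro v hv
      by_cases h : v = r
      · exact h ▸ SimpleGraph.Reachable.refl _
      · exact ((parent_adj_parent p r m hstep h).reachable).trans
          (ih (p v) (by have := hstep v h; omega))
  exact key (m v) v le_rfl

lemma parent_isTree (p : V → V) (r : V) (m : V → ℕ)
    (hstep : ∀ v, v ≠ r → m (p v) < m v) :
    (SimpleGraph.fromRel (fun a b => a ≠ r ∧ p a = b)).IsTree := by
  classical
  set H := SimpleGraph.fromRel (fun a b => a ≠ r ∧ p a = b) with hH
  constructor
  · haveI : Nonempty V := ⟨r⟩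
    exact SimpleGraph.Connected.mk
      (fun a b => (parent_reach p r m hstep a).trans (parent_reach p r m hstep b).symm)
  · intro v c hc
    obtain ⟨u, humem, humax⟩ : ∃ u ∈ c.support, ∀ w ∈ c.support, m w ≤ m u := by
      obtain ⟨u, h1, h2⟩ := c.support.toFinset.exists_max_image m ⟨v, by simp⟩
      exact ⟨u, List.mem_toFinset.1 h1, fun w hw => h2 w (List.mem_toFinset.2 hw)⟩
    have hc' := hc.rotate humem
    have hsup : ∀ w, w ∈ (c.rotate u humem).support → w ∈ c.support := by
      intro w hw
      rw [SimpleGraph.Walk.support_eq_cons] at hw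
      rcases List.mem_cons.1 hw with hw | hw
      · exact hw ▸ humem
      · have h2 := (SimpleGraph.Walk.support_rotate c u humem).mem_iff.1 hw
        rw [SimpleGraph.Walk.support_eq_cons]
        exact List.mem_cons_of_mem _ h2
    revert hc' hsup
    generalize c.rotate u humem = c'
    intro hc' hsup
    cases c' with
    | nil => exact SimpleGraph.Walk.IsCycle.not_of_nil hc'
    | cons hadj q =>
      rename_i x
      obtain ⟨hqpath, hqe⟩ := (SimpleGraph.Walk.cons_isCycle_iff q hadj).1 hc'
      have hxsup : x ∈ c.support := by
        refine hsup x ?_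
        simp [SimpleGraph.Walk.support_cons, q.start_mem_support]
      have hpux : p u = x := by
        rcases (parent_adj p r).1 hadj with ⟨hne, h | h⟩
        · exact h.2
        · exfalso
          have := hstep x h.1
          rw [h.2] at this
          exact absurd (humax x hxsup) (by omega)
      -- examine the last edge of q
      cases hqr : q.reverse with
      | nil =>
        exfalso
        have : q.length = 0 := by
          have := congrArg SimpleGraph.Walk.length hqr
          rw [SimpleGraph.Walk.length_reverse] at this
          simpa using this
        have h3 := hc'.three_le_length
        rw [SimpleGraph.Walk.length_cons] at h3
        omega
      | cons hadj2 q2 =>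
        rename_i y
        have hedge : s(u, y) ∈ q.edges := by
          have : s(u, y) ∈ q.reverse.edges := by
            rw [hqr]
            simp
          rw [SimpleGraph.Walk.edges_reverse, List.mem_reverse] at this
          exact this
        have hysup : y ∈ c.support := by
          refine hsup y ?_
          have h3 : y ∈ q.support := SimpleGraph.Walk.snd_mem_support_of_mem_edges q hedge
          simp [SimpleGraph.Walk.support_cons, h3]
        have hpuy : p u = y := by
          rcases (parent_adj p r).1 hadj2 with ⟨hne, h | h⟩
          · exact h.2
          · exfalso
            have := hstep y h.1
            rw [h.2] at this
            exact absurd (humax y hysup) (by omega)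
        apply hqe
        have hxy : x = y := hpux.symm.trans hpuy
        rw [show s(u, x) = s(u, y) from by rw [hxy]]
        exact hedge

end ParentTree

section RegionBound

variable {V : Type} [Fintype V] [DecidableEq V] {G : SimpleGraph V} (hG : G.IsTree) (r : V)
include hG

lemma region_bound (k e : ℕ) (ν : V → ℕ) (he : ∀ v, G.dist r v ≤ e) (t : V)
    (hcomb : ∀ s : Finset V, s.card = k →
      (∀ v ∈ s, Anc G r t v ∧ v ≠ t) →
      (∀ v ∈ s, ∀ w ∈ s, v ≠ w → ¬ Anc G r v w) →
      (∀ v ∈ s, ν v = ν t) → False) :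
    ({x | Anc G r t x ∧ ν x = ν t} : Set V).ncard ≤ k * (e + 1) := by
  classical
  set R : Set V := {x | Anc G r t x ∧ ν x = ν t} with hR
  set M : Finset V := Finset.univ.filter (fun m => m ∈ R ∧ ∀ x ∈ R, Anc G r m x → x = m)
    with hM
  have hMR : ∀ m ∈ M, m ∈ R ∧ ∀ x ∈ R, Anc G r m x → x = m := by
    intro m hm
    simpa [hM] using hm
  have hstep1 : ∀ x ∈ R, ∃ m ∈ M, Anc G r x m := by
    intro x hx
    set D : Finset V := Finset.univ.filter (fun y => y ∈ R ∧ Anc G r x y) with hD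
    have hxD : x ∈ D := by
      simp [hD, hx, anc_refl hG r x]
    obtain ⟨mm, hmm, hmax⟩ := D.exists_max_image (fun y => G.dist r y) ⟨x, hxD⟩
    have hmm' : mm ∈ R ∧ Anc G r x mm := by simpa [hD] using hmm
    refine ⟨mm, ?_, hmm'.2⟩
    simp only [hM, Finset.mem_filter, Finset.mem_univ, true_and]
    refine ⟨hmm'.1, ?_⟩
    intro z hz hanc
    have hzD : z ∈ D := by
      simp only [hD, Finset.mem_filter, Finset.mem_univ, true_and]
      exact ⟨hz, anc_trans hG r hmm'.2 hanc⟩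
    have h1 := hmax z hzD
    unfold Anc at hanc
    exact ((dist_eq_zero_iff' hG).1 (by omega)).symm
  have hMcard : M.card ≤ k := by
    by_contra hcon
    push_neg at hcon
    have h1 : k ≤ (M.erase t).card := by
      have := M.card_erase_le (a := t)
      have h2 := Finset.card_erase_of_mem (s := M) (a := t)
      by_cases ht : t ∈ M
      · rw [Finset.card_erase_of_mem ht]; omega
      · rw [Finset.erase_eq_of_notMem ht]; omega
    obtain ⟨s, hs, hscard⟩ := Finset.exists_subset_card_eq h1
    refine hcomb s hscard ?_ ?_ ?_
    · intro v hv
      have hv' := hs hv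
      have h2 := (hMR v (Finset.mem_of_mem_erase hv')).1
      exact ⟨h2.1, Finset.ne_of_mem_erase hv'⟩
    · intro v hv w hw hne hanc
      have hvM := Finset.mem_of_mem_erase (hs hv)
      have hwR := (hMR w (Finset.mem_of_mem_erase (hs hw))).1
      exact hne ((hMR v hvM).2 w hwR hanc).symm
    · intro v hv
      exact (hMR v (Finset.mem_of_mem_erase (hs hv))).1.2
  -- choose shortest paths from t to each maximal element
  have hw : ∀ mm : V, ∃ w : G.Walk t mm, w.length = G.dist t mm :=
    fun mm => hG.isConnected.exists_walk_length_eq_dist t mm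
  choose w hwlen using hw
  have hcover : R ⊆ ↑(M.biUnion (fun mm => (w mm).support.toFinset)) := by
    intro x hx
    obtain ⟨mm, hmmM, hanc⟩ := hstep1 x hx
    have hmmR := (hMR mm hmmM).1
    simp only [Finset.coe_biUnion, Set.mem_iUnion, Finset.mem_coe, List.coe_toFinset]
    refine ⟨mm, hmmM, ?_⟩
    show x ∈ (w mm).support
    rw [mem_support_iff_dist hG (w mm) ((w mm).isPath_of_length_eq_dist (hwlen mm))]
    have h1 := hx.1
    have h2 := hmmR.1
    unfold Anc at *
    omega
  calc R.ncard ≤ (↑(M.biUnion (fun mm => (w mm).support.toFinset)) : Set V).ncard :=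
        Set.ncard_le_ncard hcover (Set.toFinite _)
    _ = (M.biUnion (fun mm => (w mm).support.toFinset)).card := Set.ncard_coe_finset _
    _ ≤ ∑ mm ∈ M, ((w mm).support.toFinset).card := Finset.card_biUnion_le
    _ ≤ ∑ mm ∈ M, (e + 1) := by
        refine Finset.sum_le_sum ?_
        intro mm hmm
        have h1 : ((w mm).support.toFinset).card ≤ (w mm).support.length :=
          List.toFinset_card_le _
        have h2 : (w mm).support.length = G.dist t mm + 1 := by
          rw [SimpleGraph.Walk.length_support, hwlen mm]
        have h3 : G.dist t mm ≤ e := by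
          have h4 := (hMR mm hmm).1.1
          unfold Anc at h4
          have h5 := he mm
          omega
        omega
    _ = M.card * (e + 1) := by rw [Finset.sum_const, smul_eq_mul]
    _ ≤ k * (e + 1) := Nat.mul_le_mul_right _ hMcard

end RegionBound
section Master

lemma master {n : ℕ} (e d k : ℕ) (hk : 1 ≤ k) (G : SimpleGraph (Fin n)) (hG : G.IsTree)
    (r : Fin n) (he : ∀ v, G.dist r v ≤ e)
    (hnm : ¬ ∃ μ : {l : List (Fin k) // l.length ≤ d + 1} → Set (Fin n),
      IsMinorMap (kAryTree (d + 1) k) G μ) :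
    ∃ H : FinGraph, H ∈ classTd d ∧ ∃ B : Fin H.n → Set (Fin n),
      IsDeconstruction G H.G B ∧ DeconWidthLE H.G B (2 * (k * (e + 1))) := by
  classical
  have hng : ¬ Good G r k (d + 1) r := by
    rintro ⟨μ, hμ, -, -⟩
    exact hnm ⟨μ, hμ⟩
  have hngv : ∀ v, ¬ Good G r k (d + 1) v :=
    fun v hv => hng (good_anc_mono hG r (anc_root hG r v) hv)
  have hνex : ∀ v, ∃ m : ℕ, (¬ Good G r k m v) ∧ (∀ j, j < m → Good G r k j v) ∧
      m ≤ d + 1 ∧ 1 ≤ m := by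
    intro v
    have hex : ∃ j, ¬ Good G r k j v := ⟨d + 1, hngv v⟩
    refine ⟨Nat.find hex, Nat.find_spec hex, fun j hj => not_not.1 (Nat.find_min hex hj),
      Nat.find_le (hngv v), ?_⟩
    rcases Nat.eq_zero_or_pos (Nat.find hex) with h0 | h0
    · exfalso
      have h1 := Nat.find_spec hex
      rw [h0] at h1
      exact h1 (good_zero G r k v)
    · exact h0
  choose ν hspec hgoodlt hνle hν1 using hνex
  have hltgood : ∀ v j, Good G r k j v → j < ν v := by
    intro v j hj
    by_contra hcon
    push_neg at hcon
    exact hspec v (good_of_le hcon hj)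
  have hmono : ∀ u v, Anc G r u v → ν v ≤ ν u := by
    intro u v hanc
    by_contra hcon
    push_neg at hcon
    exact absurd (hltgood u (ν u) (good_anc_mono hG r hanc (hgoodlt v (ν u) hcon))) (by omega)
  have hcomb' : ∀ t : Fin n, ∀ s : Finset (Fin n), s.card = k →
      (∀ v ∈ s, Anc G r t v ∧ v ≠ t) →
      (∀ v ∈ s, ∀ w ∈ s, v ≠ w → ¬ Anc G r v w) →
      (∀ v ∈ s, ν v = ν t) → False := by
    intro t s hcard hanc hinc hνs
    have hgs : ∀ v ∈ s, Good G r k (ν t - 1) v := by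
      intro v hv
      refine hgoodlt v _ ?_
      rw [hνs v hv]
      have := hν1 t
      omega
    have hcombined := good_combine hG r hk hcard hanc hinc hgs
    rw [Nat.sub_add_cancel (hν1 t)] at hcombined
    exact absurd (hltgood t _ hcombined) (by omega)
  have hreg : ∀ t : Fin n, ({x | Anc G r t x ∧ ν x = ν t} : Set (Fin n)).ncard ≤ k * (e + 1) :=
    fun t => region_bound hG r k e ν he t (hcomb' t)
  rcases Nat.eq_zero_or_pos d with hd0 | hd1
  · -- d = 0 : a single-vertex host tree
    subst hd0
    refine ⟨⟨1, ⊥⟩, ⟨?_, 0, fun v => by simp [SimpleGraph.dist_bot]⟩,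
      fun _ => Set.univ, ⟨?_, ?_⟩, ?_⟩
    · constructor
      · haveI : Nonempty (Fin 1) := ⟨0⟩
        exact SimpleGraph.Connected.mk (fun a b => by
          rw [Subsingleton.elim a b])
      · exact SimpleGraph.isAcyclic_bot
    · intro g g' _
      exact ⟨0, 0, Or.inl rfl, Or.inl trivial, Or.inl trivial⟩
    · intro g
      show ConnSet (⊥ : SimpleGraph (Fin 1)) _
      show SimpleGraph.Connected _
      haveI : Nonempty {h : Fin 1 // h ∈ {h : Fin 1 | g ∈ Set.univ}} := ⟨⟨0, trivial⟩⟩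
      exact SimpleGraph.Connected.mk (fun a b => by rw [Subsingleton.elim a b])
    · intro h h' _
      rw [Set.union_self]
      have hsub : (Set.univ : Set (Fin n)) ⊆ {x | Anc G r r x ∧ ν x = ν r} := by
        intro x _
        refine ⟨anc_root hG r x, ?_⟩
        have h1 := hmono r x (anc_root hG r x)
        have h2 := hν1 x
        have h3 := hνle r
        omega
      calc (Set.univ : Set (Fin n)).ncard
          ≤ ({x | Anc G r r x ∧ ν x = ν r} : Set (Fin n)).ncard :=
            Set.ncard_le_ncard hsub (Set.toFinite _)
        _ ≤ k * (e + 1) := hreg r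
        _ ≤ 2 * (k * (e + 1)) := by omega
  -- now d ≥ 1
  -- the parent function in G
  have hparex : ∀ v : Fin n, ∃ q : Fin n,
      (v ≠ r → G.Adj q v ∧ G.dist r v = G.dist r q + 1) ∧
      (∀ y, v ≠ r → G.Adj y v → G.dist r v = G.dist r y + 1 → y = q) := by
    intro v
    by_cases hv : v = r
    · exact ⟨r, fun hc => absurd hv hc, fun y hc _ _ => absurd hv hc⟩
    · obtain ⟨q, hq, huniq⟩ := parent_exists_unique hG r hv
      exact ⟨q, fun _ => hq, fun y _ hadj hd => huniq y ⟨hadj, hd⟩⟩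
  choose par hpar hparu using hparex
  -- the top of the region of v
  have htopex : ∀ v : Fin n, ∃ a : Fin n, (Anc G r a v ∧ ν a = ν v) ∧
      ∀ b : Fin n, Anc G r b v → ν b = ν v → G.dist r a ≤ G.dist r b := by
    intro v
    obtain ⟨a, ha, hmin⟩ := Set.exists_min_image {a : Fin n | Anc G r a v ∧ ν a = ν v}
      (fun a => G.dist r a) (Set.toFinite _) ⟨v, anc_refl hG r v, rfl⟩
    exact ⟨a, ha, fun b h1 h2 => hmin b ⟨h1, h2⟩⟩
  choose top htop htopmin using htopex
  have htopu : ∀ v a, Anc G r a v → ν a = ν v →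
      (∀ b, Anc G r b v → ν b = ν v → G.dist r a ≤ G.dist r b) → top v = a := by
    intro v a h1 h2 hmin
    have h3 := htop v
    have h4 : G.dist r (top v) ≤ G.dist r a := htopmin v a h1 h2
    have h5 : G.dist r a ≤ G.dist r (top v) := hmin (top v) h3.1 h3.2
    rcases anc_total hG r h3.1 h1 with h | h
    · exact anc_eq_of_dist_eq hG r h (by omega)
    · exact (anc_eq_of_dist_eq hG r h (by omega)).symm
  have htopr_iff : ∀ v, top v = r ↔ ν v = ν r := by
    intro v
    constructor
    · intro h
      have := (htop v).2
      rw [h] at this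
      exact this.symm
    · intro h
      refine htopu v r (anc_root hG r v) h.symm ?_
      intro b _ _
      rw [SimpleGraph.dist_self]
      omega
  -- the parent function of the host tree
  set p' : Fin n → Fin n := fun v => if top v = r then r else top (par (top v)) with hp'
  have hPstep : ∀ v, top v ≠ r → ν v < ν (p' v) := by
    intro v htv
    have ht := htop v
    set t := top v with hts
    obtain ⟨hq1, hq2⟩ := hpar t htv
    have hanc_qt : Anc G r (par t) t := by
      unfold Anc
      rw [SimpleGraph.dist_eq_one_iff_adj.2 hq1]
      omega
    have hanc_qv : Anc G r (par t) v := anc_trans hG r hanc_qt ht.1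
    have hle : ν v ≤ ν (par t) := le_trans (le_of_eq ht.2.symm) (hmono (par t) t hanc_qt)
    have hne2 : ν (par t) ≠ ν v := by
      intro hc
      have h5 := htopmin v (par t) hanc_qv hc
      rw [← hts] at h5
      omega
    have hp'v : p' v = top (par t) := by
      rw [hp']
      simp only [← hts, if_neg htv]
    rw [hp'v, (htop (par t)).2]
    omega
  set mfun : Fin n → ℕ := fun v => if v = r then 0 else (d + 2) - ν v with hmfun
  have hstep : ∀ v, v ≠ r → mfun (p' v) < mfun v := by
    intro v hv
    have hmv : mfun v = (d + 2) - ν v := by rw [hmfun]; simp [hv]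
    have hb1 := hν1 v
    have hb2 := hνle v
    by_cases htv : top v = r
    · have : p' v = r := by rw [hp']; simp [htv]
      rw [this, hmv, hmfun]
      simp
      omega
    · have h1 := hPstep v htv
      by_cases hw : p' v = r
      · rw [hw, hmv, hmfun]
        simp
        omega
      · have hb3 := hνle (p' v)
        have : mfun (p' v) = (d + 2) - ν (p' v) := by rw [hmfun]; simp [hw]
        rw [this, hmv]
        omega
  set HG : SimpleGraph (Fin n) := SimpleGraph.fromRel (fun a b => a ≠ r ∧ p' a = b) with hHG
  have hHtree : HG.IsTree := parent_isTree p' r mfun hstep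
  -- height bound
  have hdistp : ∀ v, v ≠ r → HG.dist r v ≤ HG.dist r (p' v) + 1 := by
    intro v hv
    have hadj : HG.Adj v (p' v) := parent_adj_parent p' r mfun hstep hv
    have h1 := hHtree.isConnected.dist_triangle (u := r) (v := p' v) (w := v)
    have h2 : HG.dist (p' v) v = 1 := SimpleGraph.dist_eq_one_iff_adj.2 hadj.symm
    omega
  have hkey : ∀ N v, mfun v ≤ N →
      (ν v = ν r → HG.dist r v ≤ 1) ∧ (ν v < ν r → HG.dist r v ≤ ν r - ν v) := by
    intro N
    induction N with
    | zero =>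
      intro v hmv
      by_cases hv : v = r
      · subst hv
        rw [SimpleGraph.dist_self]
        exact ⟨fun _ => by omega, fun _ => by omega⟩
      · exfalso
        have : mfun v = (d + 2) - ν v := by rw [hmfun]; simp [hv]
        have := hνle v
        omega
    | succ N ih =>
      intro v hmv
      by_cases hv : v = r
      · subst hv
        rw [SimpleGraph.dist_self]
        exact ⟨fun _ => by omega, fun _ => by omega⟩
      constructor
      · intro hνv
        have htv : top v = r := (htopr_iff v).2 hνv
        have : p' v = r := by rw [hp']; simp [htv]
        have h2 := hdistp v hv
        rw [this, SimpleGraph.dist_self] at h2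
        omega
      · intro hνv
        have htv : top v ≠ r := by
          intro hc
          rw [(htopr_iff v).1 hc] at hνv
          omega
      -- step to the parent
        have h1 := hPstep v htv
        by_cases hw : p' v = r
        · have h2 := hdistp v hv
          rw [hw, SimpleGraph.dist_self] at h2
          omega
        · have hwlt : ν (p' v) < ν r := by
            rcases Nat.lt_or_ge (ν (p' v)) (ν r) with h | h
            · exact h
            · exfalso
              have hνeq : ν (p' v) = ν r := by
                have := hmono r (p' v) (anc_root hG r (p' v))
                omega
              -- p' v is a top with ν-value ν r, hence equals r
              apply hw
              rw [hp']
              simp only [if_neg htv]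
              refine (htopr_iff (par (top v))).2 ?_
              have h3 : p' v = top (par (top v)) := by rw [hp']; simp [htv]
              rw [h3] at hνeq
              rw [← (htop (par (top v))).2]
              exact hνeq
          have hmw : mfun (p' v) ≤ N := by
            have := hstep v hv
            omega
          have h4 := (ih (p' v) hmw).2 hwlt
          have h5 := hdistp v hv
          omega
  have hheight : ∀ v, HG.dist r v ≤ d := by
    intro v
    by_cases hv : v = r
    · subst hv; rw [SimpleGraph.dist_self]; omega
    · have h1 := hmono r v (anc_root hG r v)
      have h2 := hkey (mfun v) v le_rfl
      have h3 := hνle r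
      have h4 := hν1 v
      rcases Nat.lt_or_ge (ν v) (ν r) with h | h
      · have := h2.2 h
        omega
      · have := h2.1 (by omega)
        omega
  -- the bags
  set B : Fin n → Set (Fin n) := fun h => {x | top x = h} with hB
  have hBsub : ∀ h, B h ⊆ {x | Anc G r h x ∧ ν x = ν h} := by
    intro h x hx
    have hx' : top x = h := hx
    rw [← hx']
    exact ⟨(htop x).1, (htop x).2.symm⟩
  have hBcard : ∀ h, (B h).ncard ≤ k * (e + 1) :=
    fun h => le_trans (Set.ncard_le_ncard (hBsub h) (Set.toFinite _)) (hreg h)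
  -- coverage for parent-child edges of G
  have hcovstep : ∀ g g', G.Adj g g' → G.dist r g' = G.dist r g + 1 →
      ∃ h h', reflAdj HG h h' ∧ g ∈ B h ∪ B h' ∧ g' ∈ B h ∪ B h' := by
    intro g g' hadj hd
    have hancgg : Anc G r g g' := by
      unfold Anc
      rw [SimpleGraph.dist_eq_one_iff_adj.2 hadj]
      omega
    have hνle' : ν g' ≤ ν g := hmono g g' hancgg
    by_cases hνeq : ν g' = ν g
    · -- same region
      have htt : top g' = top g := by
        refine htopu g' (top g) (anc_trans hG r (htop g).1 hancgg)
          (by rw [(htop g).2, hνeq]) ?_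
        intro b hb1 hb2
        rcases anc_total hG r hb1 (anc_trans hG r (htop g).1 hancgg) with h | h
        · -- b is an ancestor of top g, hence of g
          have hbg : Anc G r b g := anc_trans hG r h (htop g).1
          exact htopmin g b hbg (by rw [hb2, hνeq])
        · unfold Anc at h
          omega
      exact ⟨top g, top g, Or.inl rfl, Or.inl rfl, Or.inl (by rw [hB]; exact htt)⟩
    · -- g' starts a fresh region
      have hνlt : ν g' < ν g := by omega
      have hg'r : g' ≠ r := by
        intro hc
        rw [hc, SimpleGraph.dist_self] at hd
        omega
      have htopg' : top g' = g' := by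
        refine htopu g' g' (anc_refl hG r g') rfl ?_
        intro b hb1 hb2
        by_cases hbg' : b = g'
        · subst hbg'; omega
        exfalso
        rcases anc_total hG r hb1 hancgg with h | h
        · -- b is a proper ancestor with the same ν-value: impossible
          have := hmono b g h
          omega
        · -- g is an ancestor of b, and b of g'
          have hd1 : G.dist r g ≤ G.dist r b := by unfold Anc at h; omega
          have hd2 : G.dist r b ≤ G.dist r g' := by unfold Anc at hb1; omega
          rcases Nat.eq_or_lt_of_le hd2 with hq | hq
          · exact hbg' (anc_eq_of_dist_eq hG r hb1 hq)
          · have hbg : b = g := (anc_eq_of_dist_eq hG r h (by omega)).symm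
            rw [hbg] at hb2
            omega
      have hpg' : g = par g' := hparu g' g hg'r hadj hd
      have htopg'r : top g' ≠ r := by rw [htopg']; exact hg'r
      have hp'g' : p' g' = top g := by
        rw [hp']
        simp only [if_neg htopg'r]
        rw [htopg', ← hpg']
      have hHadj : HG.Adj g' (top g) := by
        rw [hHG, parent_adj]
        refine ⟨?_, Or.inl ⟨hg'r, hp'g'⟩⟩
        intro hc
        have : ν g' = ν g := by rw [hc, (htop g).2]
        omega
      refine ⟨top g, g', Or.inr hHadj.symm, Or.inl rfl, Or.inr ?_⟩
      exact htopg'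
  refine ⟨⟨n, HG⟩, ⟨hHtree, r, hheight⟩, B, ⟨?_, ?_⟩, ?_⟩
  · -- coverage
    intro g g' hre
    rcases hre with heq | hadj
    · subst heq
      exact ⟨top g, top g, Or.inl rfl, Or.inl rfl, Or.inl rfl⟩
    · rcases adj_dist_step hG r hadj with h | h
      · exact hcovstep g g' hadj h
      · obtain ⟨h1, h2, h3, h4, h5⟩ := hcovstep g' g hadj.symm h
        exact ⟨h1, h2, h3, h5, h4⟩
  · -- connectivity
    intro g
    have hset : {h : Fin n | g ∈ B h} = {top g} := by
      ext h
      constructor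
      · intro hh
        exact (Set.mem_singleton_iff.2 (hh : top g = h).symm)
      · intro hh
        exact ((Set.mem_singleton_iff.1 hh).symm : top g = h)
    show ConnSet HG {h : Fin n | g ∈ B h}
    rw [hset]
    exact connSet_singleton_s5 (top g)
  · -- width
    intro h h' _
    have h1 := hBcard h
    have h2 := hBcard h'
    have h3 := Set.ncard_union_le (B h) (B h')
    omega

end Master
/-- if `𝒢` is a class of finite trees of stack depth `d`, each of
height at most `e`, then `𝒢 ≼ 𝒯_d`. -/
theorem stack_depth_decomps (d e : ℕ) (𝒢 : Set FinGraph)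
    (htree : ∀ G ∈ 𝒢, G.G.IsTree)
    (hsd : HasStackDepth 𝒢 d)
    (hht : ∀ G ∈ 𝒢, treeHeightLE G e) :
    DeconLE 𝒢 (classTd d) := by
  obtain ⟨-, hnot⟩ := hsd
  rw [StackAll] at hnot
  push_neg at hnot
  obtain ⟨k, hk1, hforall⟩ := hnot
  refine ⟨2 * (k * (e + 1)), ?_⟩
  intro G hGmem
  obtain ⟨r, hr⟩ := hht G hGmem
  have hnm : ¬ ∃ μ : {l : List (Fin k) // l.length ≤ d + 1} → Set (Fin G.n),
      IsMinorMap (kAryTree (d + 1) k) G.G μ := by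
    rintro ⟨μ, hμ⟩
    exact hforall G hGmem μ hμ
  obtain ⟨H, hHmem, B, hdec, hwid⟩ := master e d k hk1 G.G (htree G hGmem) r hr hnm
  exact ⟨H, hHmem, B, hdec, hwid⟩
end

section
/- Suppose M and G are finite rooted trees and (μ(m))_{m ∈ V(M)} is a nice M-deconstruction of G. For all d ≥ 0 and k ≥ 1, if M has property P(d,k), then G has property P(d,k). -/
open SimpleGraph

namespace PropTransferAux

open SimpleGraph SimpleGraph.Walk

variable {V : Type*} {G : SimpleGraph V} [DecidableEq V]

/-- In a tree, there is a path between any two vertices. -/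
lemma exists_path (ht : G.IsTree) (u v : V) : ∃ p : G.Walk u v, p.IsPath := by
  obtain ⟨p⟩ := ht.isConnected u v
  exact ⟨p.bypass, p.bypass_isPath⟩

/-- In a tree, every path realizes the distance. -/
lemma path_length (ht : G.IsTree) {u v : V} (p : G.Walk u v) (hp : p.IsPath) :
    p.length = G.dist u v := by
  obtain ⟨q, hq⟩ := ht.isConnected.exists_walk_length_eq_dist u v
  have h1 : q.bypass.length ≤ G.dist u v := hq ▸ q.length_bypass_le
  have h2 : G.dist u v ≤ q.bypass.length := SimpleGraph.dist_le _
  have heq : (⟨p, hp⟩ : G.Path u v) = ⟨q.bypass, q.bypass_isPath⟩ :=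
    ht.IsAcyclic.path_unique _ _
  have := congrArg (fun r : G.Path u v => r.1.length) heq
  simp only at this
  omega

/-- A vertex on a path splits the distance. -/
lemma split_mem (ht : G.IsTree) {u v w : V} (p : G.Walk u v) (hp : p.IsPath)
    (hw : w ∈ p.support) : G.dist u v = G.dist u w + G.dist w v := by
  have h1 := path_length ht _ (hp.takeUntil hw)
  have h2 := path_length ht _ (hp.dropUntil hw)
  have h3 := path_length ht p hp
  have h4 := congrArg Walk.length (p.take_spec hw)
  rw [Walk.length_append] at h4
  omega

/-- Distances to the two endpoints of an edge differ by exactly one. -/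
lemma adj_dist (ht : G.IsTree) {a b : V} (hab : G.Adj a b) (x : V) :
    G.dist x b = G.dist x a + 1 ∨ G.dist x a = G.dist x b + 1 := by
  have key : G.dist x a ≠ G.dist x b := by
    intro he
    obtain ⟨p, hp⟩ := exists_path ht x a
    by_cases hb : b ∈ p.support
    · have hs := split_mem ht p hp hb
      have h0 : G.dist b a ≠ 0 := fun h =>
        hab.ne (ht.isConnected.dist_eq_zero_iff.mp h).symm
      omega
    · have hbr : b ∉ p.reverse.support := by
        rwa [Walk.support_reverse, List.mem_reverse]
      have hpath : (Walk.cons hab.symm p.reverse).IsPath := hp.reverse.cons hbr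
      have hl := path_length ht _ hpath
      have hl2 := path_length ht p hp
      rw [Walk.length_cons, Walk.length_reverse] at hl
      have hc : G.dist b x = G.dist x b := SimpleGraph.dist_comm
      rw [hc] at hl
      omega
  have hd1 : G.dist a b = 1 := by
    have h1 : G.dist a b ≤ 1 := by
      have := SimpleGraph.dist_le hab.toWalk
      simpa using this
    have h2 : G.dist a b ≠ 0 := fun h =>
      hab.ne (ht.isConnected.dist_eq_zero_iff.mp h)
    omega
  have t1 : G.dist x b ≤ G.dist x a + 1 := by
    have := ht.isConnected.dist_triangle (u := x) (v := a) (w := b)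
    omega
  have t2 : G.dist x a ≤ G.dist x b + 1 := by
    have := ht.isConnected.dist_triangle (u := x) (v := b) (w := a)
    have hc : G.dist b a = G.dist a b := SimpleGraph.dist_comm
    rw [hc] at this
    omega
  omega

/-- The neighbour one step closer to `y` is unique. -/
lemma toward_unique (ht : G.IsTree) {x y w w' : V} (h1 : G.Adj x w) (h2 : G.Adj x w')
    (d1 : G.dist w y + 1 = G.dist x y) (d2 : G.dist w' y + 1 = G.dist x y) :
    w = w' := by
  obtain ⟨p, hp⟩ := exists_path ht w y
  obtain ⟨q, hq⟩ := exists_path ht w' y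
  have hx1 : x ∉ p.support := by
    intro hm
    have hs := split_mem ht p hp hm
    have h0 : G.dist w x ≠ 0 := fun h =>
      h1.ne' (ht.isConnected.dist_eq_zero_iff.mp h)
    have hwx : G.dist w x = 1 := by
      have := SimpleGraph.dist_le h1.symm.toWalk
      simpa using this |> fun h' => le_antisymm h' (Nat.one_le_iff_ne_zero.mpr h0)
    omega
  have hx2 : x ∉ q.support := by
    intro hm
    have hs := split_mem ht q hq hm
    have h0 : G.dist w' x ≠ 0 := fun h =>
      h2.ne' (ht.isConnected.dist_eq_zero_iff.mp h)
    have hwx : G.dist w' x = 1 := by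
      have := SimpleGraph.dist_le h2.symm.toWalk
      simpa using this |> fun h' => le_antisymm h' (Nat.one_le_iff_ne_zero.mpr h0)
    omega
  have hp1 : (Walk.cons h1 p).IsPath := hp.cons hx1
  have hq1 : (Walk.cons h2 q).IsPath := hq.cons hx2
  have heq : (⟨Walk.cons h1 p, hp1⟩ : G.Path x y) = ⟨Walk.cons h2 q, hq1⟩ :=
    ht.IsAcyclic.path_unique _ _
  have := congrArg (fun r : G.Path x y => r.1.getVert 1) heq
  simpa [Walk.getVert_cons_succ] using this

/-- Metric betweenness implies membership of any path. -/
lemma mem_of_between (ht : G.IsTree) {z : V} :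
    ∀ {x y : V} (p : G.Walk x y), p.IsPath →
      G.dist x y = G.dist x z + G.dist z y → z ∈ p.support := by
  intro x y p
  induction p with
  | nil =>
    rename_i u
    intro _ hd
    have h0 : G.dist u u = 0 := by simp
    have hz : G.dist u z = 0 := by omega
    have huz := ht.isConnected.dist_eq_zero_iff.mp hz
    simp [← huz]
  | @cons x w y h q ih =>
    intro hp hd
    by_cases hxz : x = z
    · simp [hxz]
    · have hq : q.IsPath := ((Walk.cons_isPath_iff h q).mp hp).1
      have hdq : G.dist w y + 1 = G.dist x y := by
        have l1 := path_length ht _ hp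
        have l2 := path_length ht q hq
        rw [Walk.length_cons] at l1
        omega
      have hxz0 : G.dist x z ≠ 0 := fun h0 =>
        hxz (ht.isConnected.dist_eq_zero_iff.mp h0)
      obtain ⟨r, hr⟩ := exists_path ht x z
      cases r with
      | nil =>
        rw [← path_length ht _ hr] at hxz0
        simp at hxz0
      | @cons _ w'' _ h' r' =>
        have hr' : r'.IsPath := ((Walk.cons_isPath_iff h' r').mp hr).1
        have hwz : G.dist w'' z + 1 = G.dist x z := by
          have l1 := path_length ht _ hr
          have l2 := path_length ht r' hr'
          rw [Walk.length_cons] at l1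
          omega
        have hwy : G.dist w'' y + 1 = G.dist x y := by
          have tri : G.dist w'' y ≤ G.dist w'' z + G.dist z y :=
            ht.isConnected.dist_triangle
          have tri2 : G.dist x y ≤ G.dist x w'' + G.dist w'' y :=
            ht.isConnected.dist_triangle
          have hxw : G.dist x w'' = 1 := by
            have hle : G.dist x w'' ≤ 1 := by
              have := SimpleGraph.dist_le h'.toWalk; simpa using this
            have hne : G.dist x w'' ≠ 0 := fun h0 =>
              h'.ne (ht.isConnected.dist_eq_zero_iff.mp h0)
            omega
          omega
        have hww : w = w'' := toward_unique ht h h' hdq hwy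
        subst hww
        have hbet : G.dist w y = G.dist w z + G.dist z y := by omega
        simp only [Walk.support_cons, List.mem_cons]
        exact Or.inr (ih hq hbet)

/-- Two vertices on a common path are metrically comparable (from the start). -/
lemma between_total (ht : G.IsTree) {x y a b : V} (p : G.Walk x y) (hp : p.IsPath)
    (ha : a ∈ p.support) (hb : b ∈ p.support) :
    G.dist x b = G.dist x a + G.dist a b ∨ G.dist x a = G.dist x b + G.dist b a := by
  have hb' := hb
  rw [← p.take_spec ha, Walk.mem_support_append_iff] at hb'
  cases hb' with
  | inl hmem =>
    right
    exact split_mem ht _ (hp.takeUntil ha) hmem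
  | inr hmem =>
    left
    have h1 := split_mem ht _ (hp.dropUntil ha) hmem
    have h2 := split_mem ht p hp ha
    have h3 := split_mem ht p hp hb
    have tri : G.dist x b ≤ G.dist x a + G.dist a b := ht.isConnected.dist_triangle
    have tri2 : G.dist x y ≤ G.dist x b + G.dist b y := ht.isConnected.dist_triangle
    omega

section Rooted

variable (T : RootedFinTree)

lemma anc_refl (a : Fin T.n) : T.Ancestor a a := by
  simp [RootedFinTree.Ancestor]

lemma anc_trans {a b c : Fin T.n} (h1 : T.Ancestor a b) (h2 : T.Ancestor b c) :
    T.Ancestor a c := by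
  unfold RootedFinTree.Ancestor at *
  have t1 : T.G.dist a c ≤ T.G.dist a b + T.G.dist b c :=
    T.isTree.isConnected.dist_triangle
  have t2 : T.G.dist T.root c ≤ T.G.dist T.root a + T.G.dist a c :=
    T.isTree.isConnected.dist_triangle
  omega

lemma anc_antisymm {a b : Fin T.n} (h1 : T.Ancestor a b) (h2 : T.Ancestor b a) :
    a = b := by
  unfold RootedFinTree.Ancestor at *
  have : T.G.dist a b = 0 := by omega
  exact T.isTree.isConnected.dist_eq_zero_iff.mp this

lemma root_anc (v : Fin T.n) : T.Ancestor T.root v := by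
  simp [RootedFinTree.Ancestor]

lemma anc_root {v : Fin T.n} (h : T.Ancestor v T.root) : v = T.root := by
  unfold RootedFinTree.Ancestor at h
  simp only [SimpleGraph.dist_self] at h
  exact (T.isTree.isConnected.dist_eq_zero_iff.mp (by omega)).symm

lemma dist_adj_one {a b : Fin T.n} (h : T.G.Adj a b) : T.G.dist a b = 1 := by
  have h1 : T.G.dist a b ≤ 1 := by
    have := SimpleGraph.dist_le h.toWalk; simpa using this
  have h2 : T.G.dist a b ≠ 0 := fun h0 =>
    h.ne (T.isTree.isConnected.dist_eq_zero_iff.mp h0)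
  omega

lemma child_anc {p c : Fin T.n} (h : T.IsChild p c) : T.Ancestor p c := by
  unfold RootedFinTree.Ancestor
  rw [dist_adj_one T h.1, h.2]

lemma adj_child {a b : Fin T.n} (h : T.G.Adj a b) :
    T.IsChild a b ∨ T.IsChild b a := by
  rcases adj_dist T.isTree h T.root with h1 | h1
  · exact Or.inl ⟨h, h1⟩
  · exact Or.inr ⟨h.symm, h1⟩

lemma parent_unique {p p' c : Fin T.n} (h : T.IsChild p c) (h' : T.IsChild p' c) :
    p = p' := by
  apply toward_unique T.isTree (y := T.root) h.1.symm h'.1.symm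
  · have e1 : T.G.dist p T.root = T.G.dist T.root p := SimpleGraph.dist_comm
    have e2 : T.G.dist c T.root = T.G.dist T.root c := SimpleGraph.dist_comm
    have := h.2
    omega
  · have e1 : T.G.dist p' T.root = T.G.dist T.root p' := SimpleGraph.dist_comm
    have e2 : T.G.dist c T.root = T.G.dist T.root c := SimpleGraph.dist_comm
    have := h'.2; omega

lemma exists_parent {v : Fin T.n} (hv : v ≠ T.root) : ∃ p, T.IsChild p v := by
  obtain ⟨r, hr⟩ := exists_path T.isTree v T.root
  cases r with
  | nil => exact (hv rfl).elim
  | @cons _ w _ h r' =>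
    have hr' : r'.IsPath := ((Walk.cons_isPath_iff h r').mp hr).1
    have l1 := path_length T.isTree _ hr
    have l2 := path_length T.isTree r' hr'
    rw [Walk.length_cons] at l1
    refine ⟨w, h.symm, ?_⟩
    have e1 : T.G.dist T.root v = T.G.dist v T.root := SimpleGraph.dist_comm
    have e2 : T.G.dist T.root w = T.G.dist w T.root := SimpleGraph.dist_comm
    omega

lemma anc_total {a b g : Fin T.n} (ha : T.Ancestor a g) (hb : T.Ancestor b g) :
    T.Ancestor a b ∨ T.Ancestor b a := by
  obtain ⟨p, hp⟩ := exists_path T.isTree T.root g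
  have hma : a ∈ p.support := mem_of_between T.isTree p hp ha
  have hmb : b ∈ p.support := mem_of_between T.isTree p hp hb
  rcases between_total T.isTree p hp hma hmb with h | h
  · exact Or.inl h
  · exact Or.inr h

lemma parent_step {a c p : Fin T.n} (hac : T.Ancestor a c) (hne : a ≠ c)
    (hp : T.IsChild p c) : T.Ancestor a p := by
  have hpc : T.Ancestor p c := child_anc T hp
  rcases anc_total T hac hpc with h | h
  · exact h
  · have hd1 : T.G.dist a c ≠ 0 := fun h0 =>
      hne (T.isTree.isConnected.dist_eq_zero_iff.mp h0)
    have hd2 : T.G.dist p c = 1 := dist_adj_one T hp.1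
    have hac' := hac
    have hpc' := hpc
    have h' := h
    unfold RootedFinTree.Ancestor at hac' hpc' h'
    have hpa : T.G.dist p a = 0 := by omega
    have hpe : p = a := T.isTree.isConnected.dist_eq_zero_iff.mp hpa
    rw [hpe]
    exact anc_refl T a

end Rooted

end PropTransferAux
namespace PropTransferAux

open SimpleGraph SimpleGraph.Walk

lemma walk_anc (T : RootedFinTree) (S : Set (Fin T.n)) :
    ∀ {g t : Fin T.n} (w : T.G.Walk g t), t ∈ S →
      (∀ x ∈ S, T.G.dist T.root t ≤ T.G.dist T.root x) →
      (∀ x ∈ w.support, x ∈ S) → T.Ancestor t g := by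
  intro g t w
  induction w with
  | nil => intro _ _ _; exact anc_refl T _
  | @cons g x t h q ih =>
    intro htS hmin hsup
    have hg : g ∈ S := hsup g (by simp)
    have ihx : T.Ancestor t x :=
      ih htS hmin (fun y hy => hsup y (by simp [Walk.support_cons, hy]))
    rcases adj_child T h with hc | hc
    · by_cases htx : t = x
      · subst htx
        have h1 := hmin g hg
        have h2 := hc.2
        omega
      · exact parent_step T ihx htx hc
    · exact anc_trans T ihx (child_anc T hc)

variable {M G : RootedFinTree} {μ : Fin M.n → Set (Fin G.n)}

lemma bag_exists (hμ : IsNiceDecon M G μ) (g : Fin G.n) : ∃ m, g ∈ μ m := by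
  obtain ⟨h, h', _, hg, _⟩ := hμ.1.1 g g (Or.inl rfl)
  rcases hg with hg | hg
  · exact ⟨h, hg⟩
  · exact ⟨h', hg⟩

lemma bag_unique (hμ : IsNiceDecon M G μ) {g : Fin G.n} {m m' : Fin M.n}
    (hg : g ∈ μ m) (hg' : g ∈ μ m') : m = m' := by
  by_contra hne
  exact (Set.disjoint_left.mp (hμ.2.1.2.1 m m' hne) hg) hg'

lemma top_exists (hμ : IsNiceDecon M G μ) (m : Fin M.n) :
    ∃ t, t ∈ μ m ∧ ∀ g ∈ μ m, G.Ancestor t g := by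
  have hconn : (G.G.induce (μ m)).Connected := hμ.2.1.1 m
  have hne : (μ m).Nonempty := by
    obtain ⟨⟨x, hx⟩⟩ := hconn.nonempty
    exact ⟨x, hx⟩
  obtain ⟨t, htm, hmin⟩ := Set.exists_min_image (μ m)
    (fun g => G.G.dist G.root g) (Set.toFinite _) hne
  refine ⟨t, htm, fun g hg => ?_⟩
  obtain ⟨w0⟩ := hconn.preconnected ⟨g, hg⟩ ⟨t, htm⟩
  refine walk_anc G (μ m) (w0.map (SimpleGraph.Embedding.induce (μ m)).toHom)
    htm hmin ?_
  intro x hx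
  have hx : x ∈ List.map (SimpleGraph.Embedding.induce (G := G.G) (μ m)).toHom w0.support := by
    rw [← Walk.support_map]; exact hx
  rw [List.mem_map] at hx
  obtain ⟨⟨y, hy⟩, _, rfl⟩ := hx
  exact hy

lemma bag_step (hμ : IsNiceDecon M G μ) {g g' : Fin G.n} {m m' : Fin M.n}
    (h : G.IsChild g g') (hg : g ∈ μ m) (hg' : g' ∈ μ m') :
    m = m' ∨ M.IsChild m m' := by
  by_cases he : m = m'
  · exact Or.inl he
  right
  obtain ⟨h1, h2, hadj, hgb, hg'b⟩ := hμ.1.1 g g' (Or.inr h.1)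
  have hm : m = h1 ∨ m = h2 := by
    rcases hgb with ha | ha
    · exact Or.inl (bag_unique hμ hg ha)
    · exact Or.inr (bag_unique hμ hg ha)
  have hm' : m' = h1 ∨ m' = h2 := by
    rcases hg'b with ha | ha
    · exact Or.inl (bag_unique hμ hg' ha)
    · exact Or.inr (bag_unique hμ hg' ha)
  have hadj' : M.G.Adj m m' := by
    rcases hadj with heq | hadj
    · subst heq
      rcases hm with rfl | rfl <;> rcases hm' with h3 | h3 <;> exact absurd h3.symm he
    · rcases hm with rfl | rfl <;> rcases hm' with rfl | rfl
      · exact absurd rfl he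
      · exact hadj
      · exact hadj.symm
      · exact absurd rfl he
  rcases adj_child M hadj' with hc | hc
  · exact hc
  · exfalso
    have hch : G.IsChild g' g := hμ.2.2.2 m' m g' g hc hg' hg h.1.symm
    have h2 := h.2
    have h3 := hch.2
    omega

lemma bag_anc (hμ : IsNiceDecon M G μ) :
    ∀ (n : ℕ) {g g' : Fin G.n} {m m' : Fin M.n}, G.G.dist G.root g' = n →
      G.Ancestor g g' → g ∈ μ m → g' ∈ μ m' → M.Ancestor m m' := by
  intro n
  induction n using Nat.strong_induction_on with
  | _ n ih =>
    intro g g' m m' hn hanc hg hg'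
    by_cases he : g = g'
    · subst he
      rw [bag_unique hμ hg hg']
      exact anc_refl M m'
    · have hgr : g' ≠ G.root := by
        intro h0
        rw [h0] at hanc
        exact he ((anc_root G hanc).trans h0.symm)
      obtain ⟨p, hp⟩ := exists_parent G hgr
      have hanc_p : G.Ancestor g p := parent_step G hanc he hp
      obtain ⟨m'', hm''⟩ := bag_exists hμ p
      have hdp : G.G.dist G.root p < n := by
        have := hp.2
        omega
      have ih1 : M.Ancestor m m'' := ih _ hdp rfl hanc_p hg hm''
      rcases bag_step hμ hp hm'' hg' with heq | hc
    -- m'' = m' or child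
      · exact heq ▸ ih1
      · exact anc_trans M ih1 (child_anc M hc)

lemma top_child (hμ : IsNiceDecon M G μ) (top : Fin M.n → Fin G.n)
    (htop1 : ∀ m, top m ∈ μ m)
    (htop2 : ∀ m, ∀ g ∈ μ m, G.Ancestor (top m) g)
    {m m' : Fin M.n} (h : M.IsChild m m') :
    G.Ancestor (top m) (top m') := by
  obtain ⟨g, hg, g', hg', hadj⟩ := hμ.2.1.2.2 m m' h.1
  have hch : G.IsChild g g' := hμ.2.2.2 m m' g g' h hg hg' hadj
  by_cases hte : top m' = g'
  · rw [hte]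
    exact anc_trans G (htop2 m g hg) (child_anc G hch)
  · have h1 : G.Ancestor (top m') g := parent_step G (htop2 m' g' hg') hte hch
    have h2 : G.Ancestor (top m) g := htop2 m g hg
    rcases anc_total G h2 h1 with hh | hh
    · exact hh
    · exfalso
      have hma : M.Ancestor m' m := bag_anc hμ _ rfl hh (htop1 m') (htop1 m)
      have hmb : M.Ancestor m m' := child_anc M h
      exact h.1.ne (anc_antisymm M hmb hma)

lemma top_anc (hμ : IsNiceDecon M G μ) (top : Fin M.n → Fin G.n)
    (htop1 : ∀ m, top m ∈ μ m)
    (htop2 : ∀ m, ∀ g ∈ μ m, G.Ancestor (top m) g) :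
    ∀ (n : ℕ) {m m' : Fin M.n}, M.G.dist M.root m' = n →
      M.Ancestor m m' → G.Ancestor (top m) (top m') := by
  intro n
  induction n using Nat.strong_induction_on with
  | _ n ih =>
    intro m m' hn hanc
    by_cases he : m = m'
    · subst he
      exact anc_refl G _
    · have hgr : m' ≠ M.root := by
        intro h0
        rw [h0] at hanc
        exact he ((anc_root M hanc).trans h0.symm)
      obtain ⟨p, hp⟩ := exists_parent M hgr
      have hanc_p : M.Ancestor m p := parent_step M hanc he hp
      have hdp : M.G.dist M.root p < n := by
        have := hp.2
        omega
      have ih1 : G.Ancestor (top m) (top p) := ih _ hdp rfl hanc_p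
      exact anc_trans G ih1 (top_child hμ top htop1 htop2 hp)

end PropTransferAux
/-- if `(μ m)_m` is a nice `M`-deconstruction of `G` and `M` has
property `P(d,k)` (for `d ≥ 0`, `k ≥ 1`), then `G` has property `P(d,k)`. -/
theorem property_transfer (M G : RootedFinTree) (μ : Fin M.n → Set (Fin G.n))
    (hμ : IsNiceDecon M G μ) (d k : ℕ) (hk : 1 ≤ k)
    (hM : PropP M k d M.root) : PropP G k d G.root := by
  classical
  open PropTransferAux in
  obtain ⟨top, htop⟩ := Classical.axiomOfChoice (PropTransferAux.top_exists hμ)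
  have htop1 : ∀ m, top m ∈ μ m := fun m => (htop m).1
  have htop2 : ∀ m, ∀ g ∈ μ m, G.Ancestor (top m) g := fun m => (htop m).2
  have hroot : top M.root = G.root :=
    PropTransferAux.anc_root G (htop2 M.root G.root hμ.2.2.1)
  have main : ∀ (d' : ℕ) (m : Fin M.n), PropP M k d' m → PropP G k d' (top m) := by
    intro d'
    induction d' with
    | zero => intro m _; trivial
    | succ d' ihd =>
      intro m hm
      obtain ⟨s, hcard, hanc, hinc, hprop⟩ := hm
      refine ⟨s.image top, ?_, ?_, ?_, ?_⟩
      · rw [Finset.card_image_of_injOn, hcard]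
        intro v hv w hw hvw
        by_contra hne
        exact (Set.disjoint_left.mp (hμ.2.1.2.1 v w hne) (htop1 v))
          (hvw ▸ htop1 w)
      · intro v' hv'
        obtain ⟨v, hv, rfl⟩ := Finset.mem_image.mp hv'
        exact PropTransferAux.top_anc hμ top htop1 htop2 _ rfl (hanc v hv)
      · intro v' hv' w' hw' hne
        obtain ⟨v, hv, rfl⟩ := Finset.mem_image.mp hv'
        obtain ⟨w, hw, rfl⟩ := Finset.mem_image.mp hw'
        have hvw : v ≠ w := fun h => hne (by rw [h])
        obtain ⟨h1, h2⟩ := hinc v hv w hw hvw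
        constructor
        · intro hA
          exact h1 (PropTransferAux.bag_anc hμ _ rfl hA (htop1 v) (htop1 w))
        · intro hA
          exact h2 (PropTransferAux.bag_anc hμ _ rfl hA (htop1 w) (htop1 v))
      · intro v' hv'
        obtain ⟨v, hv, rfl⟩ := Finset.mem_image.mp hv'
        exact ihd v (hprop v hv)
  have := main d M.root hM
  rwa [hroot] at this
end
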